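/- arXiv:1701.06610 — 6 statements merged into one kernel-verified Lean document; each statement's English description precedes it below -/
import Mathlib

section
/- Let W : X → P(Y) be a channel with finite input set X and finite output set Y, and P a probability mass function on X. For α ∈ (0,1), define the conditional Rényi divergence D_α(W‖Q|P) := Σ_x P(x) D_α(W(x)‖Q). Then there exists a probability mass function Q* on Y minimizing D_α(W‖Q|P) over all probability mass functions Q on Y; i.e., the Augustin information I_α(P; W) := inf_Q D_α(W‖Q|P) is attained. -/
open scoped BigOperators

/-- A probability mass function on a finite type. -/
def IsPMF {Y : Type*} [Fintype Y] (Q : Y → ℝ) : Prop :=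
  (∀ y, 0 ≤ Q y) ∧ ∑ y, Q y = 1

/-- The power sum appearing in the Rényi divergence; since `(0:ℝ) ^ (1-α) = 0` for `1-α > 0`,
the sum automatically restricts to `y` with `Q y > 0`. -/
noncomputable def rSum {Y : Type*} [Fintype Y] (α : ℝ) (W Q : Y → ℝ) : ℝ :=
  ∑ y, W y ^ α * Q y ^ (1 - α)

/-- Order-`α` Rényi divergence (for `α ∈ (0,1)`), valued in `EReal`, with the convention
that it is `⊤` when the power sum vanishes. -/
noncomputable def rDiv {Y : Type*} [Fintype Y] (α : ℝ) (W Q : Y → ℝ) : EReal :=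
  if rSum α W Q = 0 then ⊤
  else (((1 / (α - 1)) * Real.log (rSum α W Q) : ℝ) : EReal)

/-- Kullback–Leibler divergence, valued in `EReal`, `⊤` unless `W ≪ Q`. -/
noncomputable def kDiv {Y : Type*} [Fintype Y] (W Q : Y → ℝ) : EReal :=
  if ∀ y, Q y = 0 → W y = 0 then
    (((∑ y, if W y = 0 then 0 else W y * Real.log (W y / Q y)) : ℝ) : EReal)
  else ⊤

/-- Order-`α` divergence for `α ∈ (0,1]`: Rényi for `α ≠ 1`, KL for `α = 1`. -/
noncomputable def dA {Y : Type*} [Fintype Y] (α : ℝ) (W Q : Y → ℝ) : EReal :=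
  if α = 1 then kDiv W Q else rDiv α W Q

/-- Conditional divergence `D_α(W‖Q|P) = ∑_x P(x) D_α(W(x)‖Q)`. -/
noncomputable def cDiv {X Y : Type*} [Fintype X] [Fintype Y]
    (α : ℝ) (W : X → Y → ℝ) (Q : Y → ℝ) (P : X → ℝ) : EReal :=
  ∑ x, (P x : EReal) * dA α (W x) Q

/-- Augustin information `I_α(P;W) = inf_Q D_α(W‖Q|P)`. -/
noncomputable def aInfo {X Y : Type*} [Fintype X] [Fintype Y]
    (α : ℝ) (P : X → ℝ) (W : X → Y → ℝ) : EReal :=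
  ⨅ Q ∈ {Q : Y → ℝ | IsPMF Q}, cDiv α W Q P

open Filter Topology
noncomputable def psi (c : ℝ) : ℝ → EReal :=
  fun t => if t = 0 then ⊤ else ((c * Real.log t : ℝ) : EReal)

lemma psi_ne_bot (c t : ℝ) : psi c t ≠ ⊥ := by
  unfold psi; split <;> simp [← EReal.coe_mul]

lemma psi_continuous {c : ℝ} (hc : c < 0) : Continuous (psi c) := by
  rw [continuous_iff_continuousAt]
  intro t
  by_cases ht : t = 0
  · subst ht
    have h0 : psi c 0 = ⊤ := if_pos rfl
    unfold ContinuousAt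
    rw [h0, EReal.tendsto_nhds_top_iff_real]
    intro M
    have hc' : c ≠ 0 := ne_of_lt hc
    have hε : (0:ℝ) < Real.exp (M / c) := Real.exp_pos _
    have hev : ∀ᶠ s in 𝓝 (0:ℝ), |s - 0| < Real.exp (M / c) :=
      eventually_abs_sub_lt 0 hε
    filter_upwards [hev] with s hs
    by_cases hs0 : s = 0
    · simp [psi, hs0]
    · have habs : |s| < Real.exp (M / c) := by simpa using hs
      have hlog : Real.log s < M / c := by
        rw [← Real.log_abs]
        calc Real.log |s| < Real.log (Real.exp (M / c)) :=
              Real.log_lt_log (abs_pos.2 hs0) habs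
          _ = M / c := Real.log_exp _
      have : M < c * Real.log s := by
        have := mul_lt_mul_of_neg_left hlog hc
        rwa [mul_div_cancel₀ M hc'] at this
      simpa [psi, hs0] using EReal.coe_lt_coe_iff.2 this
  · have hev : ∀ᶠ s in 𝓝 t, s ≠ 0 := eventually_ne_nhds ht
    have hcont : ContinuousAt (fun s => ((c * Real.log s : ℝ) : EReal)) t :=
      continuous_coe_real_ereal.continuousAt.comp
        ((continuousAt_const.mul (Real.continuousAt_log ht)))
    apply hcont.congr
    filter_upwards [hev] with s hs
    simp [psi, hs]

lemma rSum_continuous {Y : Type*} [Fintype Y] {α : ℝ} (hα : α < 1) (W : Y → ℝ) :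
    Continuous (fun Q : Y → ℝ => rSum α W Q) := by
  unfold rSum
  apply continuous_finset_sum
  intro y _
  exact continuous_const.mul
    ((Real.continuous_rpow_const (by linarith)).comp (continuous_apply y))

lemma dA_eq_psi {Y : Type*} [Fintype Y] {α : ℝ} (hα : α ≠ 1) (W Q : Y → ℝ) :
    dA α W Q = psi (1 / (α - 1)) (rSum α W Q) := by
  simp [dA, rDiv, psi, hα]

lemma coe_mul_psi {p c : ℝ} (hp : 0 < p) (t : ℝ) :
    (p : EReal) * psi c t = psi (p * c) t := by
  unfold psi
  split
  · exact EReal.coe_mul_top_of_pos hp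
  · rw [← EReal.coe_mul, mul_assoc]

lemma continuous_ereal_sum {ι β : Type*} [TopologicalSpace β] (s : Finset ι)
    (f : ι → β → EReal) (hf : ∀ i ∈ s, Continuous (f i))
    (hb : ∀ i ∈ s, ∀ x, f i x ≠ ⊥) :
    Continuous (fun x => ∑ i ∈ s, f i x) ∧ ∀ x, (∑ i ∈ s, f i x) ≠ ⊥ := by
  classical
  induction s using Finset.induction_on with
  | empty => simp [continuous_const]
  | @insert a s ha ih =>
    obtain ⟨ihc, ihb⟩ := ih (fun i hi => hf i (Finset.mem_insert_of_mem hi))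
      (fun i hi => hb i (Finset.mem_insert_of_mem hi))
    have hfa := hf a (Finset.mem_insert_self a s)
    have hba := hb a (Finset.mem_insert_self a s)
    simp only [Finset.sum_insert ha]
    constructor
    · rw [continuous_iff_continuousAt]
      intro x
      exact (EReal.continuousAt_add (Or.inr (ihb x)) (Or.inl (hba x))).comp
        ((hfa.prodMk ihc).continuousAt)
    · intro x
      simp [EReal.add_eq_bot_iff, hba x, ihb x]

/-- the Augustin information is attained by some pmf `Q*`. -/
theorem augustin_information_attained {X Y : Type*} [Fintype X] [Fintype Y]
    [Nonempty X] [Nonempty Y]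
    (α : ℝ) (hα : α ∈ Set.Ioo (0 : ℝ) 1)
    (W : X → Y → ℝ) (hW : ∀ x, IsPMF (W x)) (P : X → ℝ) (hP : IsPMF P) :
    ∃ Qstar : Y → ℝ, IsPMF Qstar ∧
      ∀ Q : Y → ℝ, IsPMF Q → cDiv α W Qstar P ≤ cDiv α W Q P := by
  obtain ⟨hα0, hα1⟩ := hα
  have hαne : α ≠ 1 := ne_of_lt hα1
  have hc : (1:ℝ) / (α - 1) < 0 := div_neg_of_pos_of_neg one_pos (by linarith)
  set f : X → (Y → ℝ) → EReal := fun x Q => (P x : EReal) * dA α (W x) Q with hf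
  have hterm : ∀ x, Continuous (f x) ∧ ∀ Q, f x Q ≠ ⊥ := by
    intro x
    rcases eq_or_lt_of_le (hP.1 x) with h0 | hpos
    · constructor
      · have : f x = fun _ => 0 := by funext Q; simp [hf, ← h0]
        rw [this]; exact continuous_const
      · intro Q; simp [hf, ← h0]
    · have heq : f x = fun Q => psi (P x * (1/(α-1))) (rSum α (W x) Q) := by
        funext Q
        show (P x : EReal) * dA α (W x) Q = _
        rw [dA_eq_psi hαne, coe_mul_psi hpos]
      constructor
      · rw [heq]
        exact (psi_continuous (mul_neg_of_pos_of_neg hpos hc)).comp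
          (rSum_continuous hα1 (W x))
      · intro Q; rw [heq]; exact psi_ne_bot _ _
  have hcont : Continuous (fun Q : Y → ℝ => cDiv α W Q P) := by
    have := (continuous_ereal_sum Finset.univ f (fun i _ => (hterm i).1)
      (fun i _ x => (hterm i).2 x)).1
    exact this
  have hSeq : {Q : Y → ℝ | IsPMF Q} = stdSimplex ℝ Y := rfl
  have hScomp : IsCompact {Q : Y → ℝ | IsPMF Q} := hSeq ▸ isCompact_stdSimplex ℝ Y
  have hSne : Set.Nonempty {Q : Y → ℝ | IsPMF Q} := by
    classical
    obtain ⟨y0⟩ := ‹Nonempty Y›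
    refine ⟨fun y => if y = y0 then 1 else 0, fun y => by dsimp only; split <;> norm_num, ?_⟩
    simp
  obtain ⟨Qstar, hQmem, hmin⟩ := hScomp.exists_isMinOn hSne hcont.continuousOn
  exact ⟨Qstar, hQmem, fun Q hQ => hmin hQ⟩
end

section
/- Let W : X → P(Y) be a channel with finite X and Y, P a probability mass function on X with full support on X, α ∈ (0,1), and suppose every output y ∈ Y satisfies W(x)(y) > 0 for some x with P(x) > 0. If Q₁ and Q₂ are both strictly positive probability mass functions on Y achieving the minimum of D_α(W‖Q|P) := Σ_x P(x) D_α(W(x)‖Q) over strictly positive Q, then Q₁ = Q₂ (uniqueness of the Augustin mean). -/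
open scoped BigOperators

-- auxiliary midpoint concavity lemmas

lemma mid_rpow {p a b : ℝ} (hp₀ : 0 < p) (hp₁ : p < 1) (ha : 0 ≤ a) (hb : 0 ≤ b) :
    (a ^ p + b ^ p) / 2 ≤ ((a + b) / 2) ^ p := by
  have h := (Real.concaveOn_rpow hp₀.le hp₁.le).2 (Set.mem_Ici.2 ha) (Set.mem_Ici.2 hb)
    (by norm_num : (0:ℝ) ≤ 1/2) (by norm_num : (0:ℝ) ≤ 1/2) (by norm_num)
  simp only [smul_eq_mul] at h
  calc (a ^ p + b ^ p) / 2 = 1/2 * a ^ p + 1/2 * b ^ p := by ring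
    _ ≤ (1/2 * a + 1/2 * b) ^ p := h
    _ = ((a + b)/2) ^ p := by ring_nf

lemma mid_rpow_lt {p a b : ℝ} (hp₀ : 0 < p) (hp₁ : p < 1) (ha : 0 ≤ a) (hb : 0 ≤ b)
    (hab : a ≠ b) : (a ^ p + b ^ p) / 2 < ((a + b) / 2) ^ p := by
  have h := (Real.strictConcaveOn_rpow hp₀ hp₁).2 (Set.mem_Ici.2 ha) (Set.mem_Ici.2 hb)
    hab (by norm_num : (0:ℝ) < 1/2) (by norm_num : (0:ℝ) < 1/2) (by norm_num)
  simp only [smul_eq_mul] at h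
  calc (a ^ p + b ^ p) / 2 = 1/2 * a ^ p + 1/2 * b ^ p := by ring
    _ < (1/2 * a + 1/2 * b) ^ p := h
    _ = ((a + b)/2) ^ p := by ring_nf

lemma mid_log {s t : ℝ} (hs : 0 < s) (ht : 0 < t) :
    (Real.log s + Real.log t) / 2 ≤ Real.log ((s + t) / 2) := by
  have h := strictConcaveOn_log_Ioi.concaveOn.2 (Set.mem_Ioi.2 hs) (Set.mem_Ioi.2 ht)
    (by norm_num : (0:ℝ) ≤ 1/2) (by norm_num : (0:ℝ) ≤ 1/2) (by norm_num)
  simp only [smul_eq_mul] at h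
  calc (Real.log s + Real.log t) / 2 = 1/2 * Real.log s + 1/2 * Real.log t := by ring
    _ ≤ Real.log (1/2 * s + 1/2 * t) := h
    _ = Real.log ((s + t)/2) := by ring_nf

/-- uniqueness of the Augustin mean among strictly positive minimizers. -/
theorem augustin_mean_unique {X Y : Type*} [Fintype X] [Fintype Y]
    [Nonempty X] [Nonempty Y]
    (α : ℝ) (hα : α ∈ Set.Ioo (0 : ℝ) 1)
    (W : X → Y → ℝ) (hW : ∀ x, IsPMF (W x))
    (P : X → ℝ) (hP : IsPMF P) (hPpos : ∀ x, 0 < P x)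
    (hsupp : ∀ y, ∃ x, 0 < P x ∧ 0 < W x y)
    (Q₁ Q₂ : Y → ℝ)
    (hQ₁ : (∀ y, 0 < Q₁ y) ∧ ∑ y, Q₁ y = 1)
    (hQ₂ : (∀ y, 0 < Q₂ y) ∧ ∑ y, Q₂ y = 1)
    (hmin₁ : ∀ Q : Y → ℝ, (∀ y, 0 < Q y) → ∑ y, Q y = 1 →
      ∑ x, P x * ((1 / (α - 1)) * Real.log (∑ y, W x y ^ α * Q₁ y ^ (1 - α))) ≤
        ∑ x, P x * ((1 / (α - 1)) * Real.log (∑ y, W x y ^ α * Q y ^ (1 - α))))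
    (hmin₂ : ∀ Q : Y → ℝ, (∀ y, 0 < Q y) → ∑ y, Q y = 1 →
      ∑ x, P x * ((1 / (α - 1)) * Real.log (∑ y, W x y ^ α * Q₂ y ^ (1 - α))) ≤
        ∑ x, P x * ((1 / (α - 1)) * Real.log (∑ y, W x y ^ α * Q y ^ (1 - α)))) :
    Q₁ = Q₂ := by
  have hW : ∀ x, (∀ y, 0 ≤ W x y) ∧ ∑ y, W x y = 1 := hW

  obtain ⟨hα0, hα1⟩ := hα
  have hp0 : (0:ℝ) < 1 - α := by linarith
  have hp1 : 1 - α < 1 := by linarith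
  by_contra hne
  obtain ⟨y₀, hy₀⟩ : ∃ y, Q₁ y ≠ Q₂ y := by
    by_contra h; push_neg at h; exact hne (funext h)
  set Q : Y → ℝ := fun y => (Q₁ y + Q₂ y) / 2 with hQdef
  have hQpos : ∀ y, 0 < Q y := fun y => by
    have := hQ₁.1 y; have := hQ₂.1 y; simp only [hQdef]; linarith
  have hQsum : ∑ y, Q y = 1 := by
    simp only [hQdef]
    rw [← Finset.sum_div, Finset.sum_add_distrib, hQ₁.2, hQ₂.2]
    norm_num
  -- power sums
  set S : (Y → ℝ) → X → ℝ := fun R x => ∑ y, W x y ^ α * R y ^ (1 - α) with hSdef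
  have hSpos : ∀ (R : Y → ℝ), (∀ y, 0 < R y) → ∀ x, 0 < S R x := by
    intro R hR x
    obtain ⟨y, hy⟩ : ∃ y, 0 < W x y := by
      by_contra h; push_neg at h
      have : ∑ y, W x y = 0 := Finset.sum_eq_zero fun y _ =>
        le_antisymm (h y) ((hW x).1 y)
      rw [(hW x).2] at this; norm_num at this
    refine Finset.sum_pos' (fun y _ => ?_) ⟨y, Finset.mem_univ y, ?_⟩
    · have h1 := (hW x).1 y; have h2 := (hR y).le; positivity
    · have := hR y; positivity
  -- mid bound on S
  have hSmid : ∀ x, (S Q₁ x + S Q₂ x) / 2 ≤ S Q x := by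
    intro x
    rw [hSdef]
    simp only
    rw [← Finset.sum_add_distrib, Finset.sum_div]
    refine Finset.sum_le_sum fun y _ => ?_
    have h := mid_rpow hp0 hp1 (hQ₁.1 y).le (hQ₂.1 y).le
    calc (W x y ^ α * Q₁ y ^ (1-α) + W x y ^ α * Q₂ y ^ (1-α)) / 2
        = W x y ^ α * ((Q₁ y ^ (1-α) + Q₂ y ^ (1-α)) / 2) := by ring
      _ ≤ W x y ^ α * ((Q₁ y + Q₂ y)/2) ^ (1-α) := by
          exact mul_le_mul_of_nonneg_left h (Real.rpow_nonneg ((hW x).1 y) α)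
  obtain ⟨x₀, hPx₀, hWx₀⟩ := hsupp y₀
  have hSmid' : (S Q₁ x₀ + S Q₂ x₀) / 2 < S Q x₀ := by
    rw [hSdef]
    simp only
    rw [← Finset.sum_add_distrib, Finset.sum_div]
    refine Finset.sum_lt_sum (fun y _ => ?_) ⟨y₀, Finset.mem_univ y₀, ?_⟩
    · have h := mid_rpow hp0 hp1 (hQ₁.1 y).le (hQ₂.1 y).le
      calc (W x₀ y ^ α * Q₁ y ^ (1-α) + W x₀ y ^ α * Q₂ y ^ (1-α)) / 2
          = W x₀ y ^ α * ((Q₁ y ^ (1-α) + Q₂ y ^ (1-α)) / 2) := by ring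
        _ ≤ W x₀ y ^ α * ((Q₁ y + Q₂ y)/2) ^ (1-α) := by
            exact mul_le_mul_of_nonneg_left h (Real.rpow_nonneg ((hW x₀).1 y) α)
    · have h := mid_rpow_lt hp0 hp1 (hQ₁.1 y₀).le (hQ₂.1 y₀).le hy₀
      calc (W x₀ y₀ ^ α * Q₁ y₀ ^ (1-α) + W x₀ y₀ ^ α * Q₂ y₀ ^ (1-α)) / 2
          = W x₀ y₀ ^ α * ((Q₁ y₀ ^ (1-α) + Q₂ y₀ ^ (1-α)) / 2) := by ring
        _ < W x₀ y₀ ^ α * ((Q₁ y₀ + Q₂ y₀)/2) ^ (1-α) := by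
            apply mul_lt_mul_of_pos_left h (Real.rpow_pos_of_pos hWx₀ α)
  -- log bounds
  have hS1 := hSpos Q₁ hQ₁.1
  have hS2 := hSpos Q₂ hQ₂.1
  have hLmid : ∀ x, (Real.log (S Q₁ x) + Real.log (S Q₂ x)) / 2 ≤ Real.log (S Q x) := by
    intro x
    refine le_trans (mid_log (hS1 x) (hS2 x)) (Real.log_le_log (by have := hS1 x; have := hS2 x; linarith) (hSmid x))
  have hLmid' : (Real.log (S Q₁ x₀) + Real.log (S Q₂ x₀)) / 2 < Real.log (S Q x₀) := by
    refine lt_of_le_of_lt (mid_log (hS1 x₀) (hS2 x₀)) (Real.log_lt_log (by have := hS1 x₀; have := hS2 x₀; linarith) hSmid')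
  -- sum with weights P
  have hsum : ∑ x, P x * ((Real.log (S Q₁ x) + Real.log (S Q₂ x)) / 2)
      < ∑ x, P x * Real.log (S Q x) := by
    refine Finset.sum_lt_sum (fun x _ => mul_le_mul_of_nonneg_left (hLmid x) (hPpos x).le)
      ⟨x₀, Finset.mem_univ x₀, mul_lt_mul_of_pos_left hLmid' (hPpos x₀)⟩
  have hc : 1 / (α - 1) < 0 := by
    apply div_neg_of_pos_of_neg one_pos; linarith
  -- combine
  set c := 1 / (α - 1) with hcdef
  have key : ∑ x, P x * (c * Real.log (S Q x))
      < (∑ x, P x * (c * Real.log (S Q₁ x)) + ∑ x, P x * (c * Real.log (S Q₂ x))) / 2 := by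
    have e1 : ∀ (R : Y → ℝ), ∑ x, P x * (c * Real.log (S R x))
        = c * ∑ x, P x * Real.log (S R x) := by
      intro R; rw [Finset.mul_sum]; exact Finset.sum_congr rfl fun x _ => by ring
    have h2 : (∑ x, P x * Real.log (S Q₁ x) + ∑ x, P x * Real.log (S Q₂ x)) / 2
        = ∑ x, P x * ((Real.log (S Q₁ x) + Real.log (S Q₂ x)) / 2) := by
      rw [← Finset.sum_add_distrib, Finset.sum_div]
      exact Finset.sum_congr rfl fun x _ => by ring
    rw [e1, e1, e1, ← mul_add, mul_div_assoc, h2]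
    exact mul_lt_mul_of_neg_left hsum hc
  have h1 := hmin₁ Q hQpos hQsum
  have h2 := hmin₂ Q hQpos hQsum
  have h12 := hmin₁ Q₂ hQ₂.1 hQ₂.2
  have h21 := hmin₂ Q₁ hQ₁.1 hQ₁.2
  simp only [hSdef] at key
  linarith
end

section
/- Let W : X → P(Y) with X, Y finite, P a probability mass function on X, α ∈ (0,1), and let Q_{α,P} be a strictly positive probability mass function on Y achieving I_α(P;W) = min_Q D_α(W‖Q|P). Then for every probability mass function Q on Y: D_α(W‖Q|P) − I_α(P;W) ≥ D_α(Q_{α,P}‖Q) (the Erven–Harremoës-type bound for Augustin information). -/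
open scoped BigOperators

section helpers

lemma ereal_coe_sum {Z : Type*} (s : Finset Z) (f : Z → ℝ) :
    ((∑ i ∈ s, f i : ℝ) : EReal) = ∑ i ∈ s, ((f i : ℝ) : EReal) :=
  map_sum (⟨⟨Real.toEReal, EReal.coe_zero⟩, EReal.coe_add⟩ : ℝ →+ EReal) f s

lemma ereal_sum_ne_bot {Z : Type*} (s : Finset Z) (f : Z → EReal)
    (h : ∀ i ∈ s, f i ≠ ⊥) : ∑ i ∈ s, f i ≠ ⊥ := by
  induction s using Finset.cons_induction with
  | empty => simp
  | cons a s ha ih =>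
    rw [Finset.sum_cons]
    rw [Ne, EReal.add_eq_bot_iff]
    push_neg
    exact ⟨h a (Finset.mem_cons_self a s), ih fun i hi => h i (Finset.mem_cons_of_mem hi)⟩

lemma ereal_sum_eq_top {Z : Type*} [DecidableEq Z] (s : Finset Z) (f : Z → EReal)
    (h : ∀ i ∈ s, f i ≠ ⊥) (h2 : ∃ i ∈ s, f i = ⊤) : ∑ i ∈ s, f i = ⊤ := by
  obtain ⟨i, hi, htop⟩ := h2
  rw [← Finset.add_sum_erase _ _ hi, htop]
  exact EReal.top_add_of_ne_bot (ereal_sum_ne_bot _ _ fun j hj => h j (Finset.mem_of_mem_erase hj))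

lemma rSum_pos {Y : Type*} [Fintype Y] {α : ℝ}
    {W0 Q : Y → ℝ} (hW : ∀ y, 0 ≤ W0 y) (hQ : ∀ y, 0 ≤ Q y)
    (h : ∃ y, W0 y ≠ 0 ∧ Q y ≠ 0) : 0 < rSum α W0 Q := by
  obtain ⟨y, hWy, hQy⟩ := h
  refine Finset.sum_pos' (fun i _ => mul_nonneg (Real.rpow_nonneg (hW i) _)
    (Real.rpow_nonneg (hQ i) _)) ⟨y, Finset.mem_univ y, ?_⟩
  have h1 : 0 < W0 y := (hW y).lt_of_ne (Ne.symm hWy)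
  have h2 : 0 < Q y := (hQ y).lt_of_ne (Ne.symm hQy)
  positivity

lemma phi_convexOn {α : ℝ} (hα1 : α < 1) :
    ConvexOn ℝ (Set.Ioi 0) (fun t : ℝ => 1/(α-1) * Real.log t) := by
  have hpos : (0:ℝ) ≤ 1/(1-α) := le_of_lt (div_pos one_pos (by linarith))
  have h2 := ((strictConcaveOn_log_Ioi.concaveOn).smul hpos).neg
  have heq : (fun t : ℝ => 1/(α-1) * Real.log t) = -((1/(1-α)) • Real.log) := by
    funext t
    simp only [Pi.neg_apply, Pi.smul_apply, smul_eq_mul]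
    have h1 : α - 1 ≠ 0 := by linarith
    have h2 : 1 - α ≠ 0 := by linarith
    field_simp
    ring
  rw [heq]
  exact h2

lemma cDiv_eq_coe {X Y : Type*} [Fintype X] [Fintype Y] {α : ℝ} (hαne : α ≠ 1)
    (W : X → Y → ℝ) (Q : Y → ℝ) (P : X → ℝ)
    (h : ∀ x, P x ≠ 0 → rSum α (W x) Q ≠ 0) :
    cDiv α W Q P
      = ((∑ x, P x * (1 / (α - 1) * Real.log (rSum α (W x) Q)) : ℝ) : EReal) := by
  rw [cDiv, ereal_coe_sum]
  refine Finset.sum_congr rfl fun x _ => ?_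
  by_cases hx : P x = 0
  · simp [hx]
  · rw [dA, if_neg hαne, rDiv, if_neg (h x hx), ← EReal.coe_mul]

end helpers

/-- the Erven–Harremoës-type bound for the Augustin information. -/
theorem augustin_EH_bound {X Y : Type*} [Fintype X] [Fintype Y]
    [Nonempty X] [Nonempty Y]
    (α : ℝ) (hα : α ∈ Set.Ioo (0 : ℝ) 1)
    (W : X → Y → ℝ) (hW : ∀ x, IsPMF (W x)) (P : X → ℝ) (hP : IsPMF P)
    (Qap : Y → ℝ) (hQap : IsPMF Qap) (hQappos : ∀ y, 0 < Qap y)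
    (hmin : ∀ Q : Y → ℝ, IsPMF Q → cDiv α W Qap P ≤ cDiv α W Q P) :
    ∀ Q : Y → ℝ, IsPMF Q →
      cDiv α W Q P - cDiv α W Qap P ≥ rDiv α Qap Q := by
  classical
  obtain ⟨hα0, hα1⟩ := hα
  have hαne : α ≠ 1 := ne_of_lt hα1
  have hden : α - 1 ≠ 0 := by intro h; exact hαne (by linarith)
  have h1α : 0 < 1 - α := by linarith
  have hPnn : ∀ x, 0 ≤ P x := hP.1
  have hWnn : ∀ x y, 0 ≤ W x y := fun x => (hW x).1
  have hWex : ∀ x, ∃ y, W x y ≠ 0 := by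
    intro x
    by_contra h
    push_neg at h
    have := (hW x).2
    simp only [h, Finset.sum_const_zero] at this
    exact one_ne_zero this.symm
  -- f x = rSum α (W x) Qap > 0
  have hfpos : ∀ x, 0 < rSum α (W x) Qap := fun x => by
    obtain ⟨y, hy⟩ := hWex x
    exact rSum_pos (hWnn x) (fun y => (hQappos y).le) ⟨y, hy, (hQappos y).ne'⟩
  -- the real-valued conditional divergence
  set rc : (Y → ℝ) → ℝ :=
    fun Q => ∑ x, P x * (1 / (α - 1) * Real.log (rSum α (W x) Q)) with hrc
  have hQapcoe : cDiv α W Qap P = ((rc Qap : ℝ) : EReal) :=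
    cDiv_eq_coe hαne W Qap P (fun x _ => (hfpos x).ne')
  -- the tilted channel and the Augustin operator image
  set T : X → Y → ℝ :=
    fun x y => W x y ^ α * Qap y ^ (1 - α) / rSum α (W x) Qap with hT
  have hTnn : ∀ x y, 0 ≤ T x y := fun x y =>
    div_nonneg (mul_nonneg (Real.rpow_nonneg (hWnn x y) _)
      (Real.rpow_nonneg (hQappos y).le _)) (hfpos x).le
  have hTsum : ∀ x, ∑ y, T x y = 1 := by
    intro x
    rw [hT]
    simp only
    rw [← Finset.sum_div]
    exact div_self (hfpos x).ne'
  have hTposW : ∀ x y, W x y ≠ 0 → 0 < T x y := by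
    intro x y hy
    have h1 : 0 < W x y := (hWnn x y).lt_of_ne (Ne.symm hy)
    have h2 : 0 < Qap y := hQappos y
    have h3 := hfpos x
    rw [hT]
    positivity
  have hTW : ∀ x y, W x y = 0 → T x y = 0 := by
    intro x y hy
    rw [hT]
    simp [hy, Real.zero_rpow hα0.ne']
  set μ : Y → ℝ := fun y => ∑ x, P x * T x y with hμ
  have hμnn : ∀ y, 0 ≤ μ y := fun y =>
    Finset.sum_nonneg fun x _ => mul_nonneg (hPnn x) (hTnn x y)
  have hμpmf : IsPMF μ := by
    refine ⟨hμnn, ?_⟩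
    rw [hμ]
    rw [Finset.sum_comm]
    simp only [← Finset.mul_sum]
    simp only [hTsum, mul_one]
    exact hP.2
  have hμpos : ∀ x y, P x ≠ 0 → W x y ≠ 0 → 0 < μ y := by
    intro x y hx hy
    refine Finset.sum_pos' (fun i _ => mul_nonneg (hPnn i) (hTnn i y))
      ⟨x, Finset.mem_univ x, ?_⟩
    exact mul_pos ((hPnn x).lt_of_ne (Ne.symm hx)) (hTposW x y hy)
  -- ratio identity
  have hratio : ∀ (R : Y → ℝ), (∀ y, 0 ≤ R y) → ∀ x,
      rSum α (W x) R / rSum α (W x) Qap = ∑ y, T x y * (R y / Qap y) ^ (1 - α) := by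
    intro R hR x
    have hterm : ∀ y, T x y * (R y / Qap y) ^ (1 - α)
        = W x y ^ α * R y ^ (1 - α) / rSum α (W x) Qap := by
      intro y
      rw [Real.div_rpow (hR y) (hQappos y).le, hT]
      simp only
      have hq : Qap y ^ (1 - α) ≠ 0 := (Real.rpow_pos_of_pos (hQappos y) _).ne'
      rw [div_mul_div_comm,
        show W x y ^ α * Qap y ^ (1-α) * R y ^ (1-α)
            = Qap y ^ (1-α) * (W x y ^ α * R y ^ (1-α)) from by ring,
        show rSum α (W x) Qap * Qap y ^ (1-α)
            = Qap y ^ (1-α) * rSum α (W x) Qap from by ring,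
        mul_div_mul_left _ _ hq]
    rw [Finset.sum_congr rfl fun y _ => hterm y, ← Finset.sum_div]
    rfl
  -- per-x Jensen lower bound on the ratio (main direction)
  have hjensen_x : ∀ (R : Y → ℝ), (∀ y, 0 ≤ R y) →
      (∀ x, P x ≠ 0 → rSum α (W x) R ≠ 0) →
      1/(α-1) * Real.log (∑ x ∈ Finset.univ.filter (fun x => P x ≠ 0),
          P x * (rSum α (W x) R / rSum α (W x) Qap))
        ≤ rc R - rc Qap := by
    intro R hR hpos
    have hRsumnn : ∀ x, 0 ≤ rSum α (W x) R := fun x =>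
      Finset.sum_nonneg fun y _ => mul_nonneg (Real.rpow_nonneg (hWnn x y) _)
        (Real.rpow_nonneg (hR y) _)
    set t := Finset.univ.filter (fun x => P x ≠ 0) with ht
    have hwsum : ∑ x ∈ t, P x = 1 := by
      rw [ht, Finset.sum_filter_ne_zero]
      exact hP.2
    have hmem : ∀ x ∈ t, rSum α (W x) R / rSum α (W x) Qap ∈ Set.Ioi (0:ℝ) := by
      intro x hx
      have hx' : P x ≠ 0 := (Finset.mem_filter.mp hx).2
      exact div_pos ((hRsumnn x).lt_of_ne (Ne.symm (hpos x hx'))) (hfpos x)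
    have hj := (phi_convexOn hα1).map_sum_le
      (fun x _ => hPnn x) hwsum hmem
    simp only [smul_eq_mul] at hj
    refine le_trans hj (le_of_eq ?_)
    calc ∑ x ∈ t, P x * (1/(α-1) * Real.log (rSum α (W x) R / rSum α (W x) Qap))
        = ∑ x ∈ t, (P x * (1 / (α - 1) * Real.log (rSum α (W x) R))
            - P x * (1 / (α - 1) * Real.log (rSum α (W x) Qap))) := by
          refine Finset.sum_congr rfl fun x hx => ?_
          rw [Real.log_div (hpos x (Finset.mem_filter.mp hx).2) (hfpos x).ne']
          ring
      _ = ∑ x, (P x * (1 / (α - 1) * Real.log (rSum α (W x) R))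
            - P x * (1 / (α - 1) * Real.log (rSum α (W x) Qap))) := by
          refine Finset.sum_subset (Finset.filter_subset _ _) fun x _ hx => ?_
          have hx0 : P x = 0 := by simpa [ht] using hx
          simp [hx0]
      _ = rc R - rc Qap := by
          rw [hrc]
          exact Finset.sum_sub_distrib _ _
  -- rSum of W x against μ is positive on the support of P
  have hμr : ∀ x, P x ≠ 0 → rSum α (W x) μ ≠ 0 := by
    intro x hx
    obtain ⟨y, hy⟩ := hWex x
    exact (rSum_pos (hWnn x) hμnn ⟨y, hy, (hμpos x y hx hy).ne'⟩).ne'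
  -- per-x upper bound via Jensen inside the y-sum
  have hup : ∀ x, P x ≠ 0 →
      1/(α-1) * Real.log (rSum α (W x) μ / rSum α (W x) Qap)
        ≤ ∑ y, T x y * Real.log (Qap y / μ y) := by
    intro x hx
    set ty := Finset.univ.filter (fun y => T x y ≠ 0) with hty
    have hwsum : ∑ y ∈ ty, T x y = 1 := by
      rw [hty, Finset.sum_filter_ne_zero]
      exact hTsum x
    have hymem : ∀ y ∈ ty, (μ y / Qap y) ^ (1 - α) ∈ Set.Ioi (0:ℝ) := by
      intro y hy
      have hTy : T x y ≠ 0 := (Finset.mem_filter.mp hy).2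
      have hWy : W x y ≠ 0 := fun h => hTy (hTW x y h)
      exact Real.rpow_pos_of_pos (div_pos (hμpos x y hx hWy) (hQappos y)) _
    have hj := (phi_convexOn hα1).map_sum_le (fun y _ => hTnn x y) hwsum hymem
    simp only [smul_eq_mul] at hj
    have harg : ∑ y ∈ ty, T x y * (μ y / Qap y) ^ (1 - α)
        = rSum α (W x) μ / rSum α (W x) Qap := by
      rw [hratio μ hμnn x]
      refine Finset.sum_subset (Finset.filter_subset _ _) fun y _ hy => ?_
      have : T x y = 0 := by simpa [hty] using hy
      simp [this]
    rw [harg] at hj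
    refine le_trans hj ?_
    have hterm : ∀ y ∈ ty, T x y * (1/(α-1) * Real.log ((μ y / Qap y) ^ (1 - α)))
        = T x y * Real.log (Qap y / μ y) := by
      intro y hy
      have hTy : T x y ≠ 0 := (Finset.mem_filter.mp hy).2
      have hWy : W x y ≠ 0 := fun h => hTy (hTW x y h)
      have hd : 0 < μ y / Qap y := div_pos (hμpos x y hx hWy) (hQappos y)
      rw [Real.log_rpow hd]
      have hlog : Real.log (Qap y / μ y) = -Real.log (μ y / Qap y) := by
        rw [← Real.log_inv, inv_div]
      rw [hlog]
      field_simp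
      ring
    rw [Finset.sum_congr rfl hterm]
    refine le_of_eq (Finset.sum_subset (Finset.filter_subset _ _) fun y _ hy => ?_)
    have : T x y = 0 := by simpa [hty] using hy
    simp [this]
  -- upper bound on rc μ - rc Qap
  have hdiff : ∀ (R : Y → ℝ), (∀ x, P x ≠ 0 → rSum α (W x) R ≠ 0) →
      rc R - rc Qap = ∑ x ∈ Finset.univ.filter (fun x => P x ≠ 0),
        P x * (1/(α-1) * Real.log (rSum α (W x) R / rSum α (W x) Qap)) := by
    intro R hpos
    rw [eq_comm]
    calc ∑ x ∈ Finset.univ.filter (fun x => P x ≠ 0),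
          P x * (1/(α-1) * Real.log (rSum α (W x) R / rSum α (W x) Qap))
        = ∑ x ∈ Finset.univ.filter (fun x => P x ≠ 0),
            (P x * (1 / (α - 1) * Real.log (rSum α (W x) R))
            - P x * (1 / (α - 1) * Real.log (rSum α (W x) Qap))) := by
          refine Finset.sum_congr rfl fun x hx => ?_
          rw [Real.log_div (hpos x (Finset.mem_filter.mp hx).2) (hfpos x).ne']
          ring
      _ = ∑ x, (P x * (1 / (α - 1) * Real.log (rSum α (W x) R))
            - P x * (1 / (α - 1) * Real.log (rSum α (W x) Qap))) := by
          refine Finset.sum_subset (Finset.filter_subset _ _) fun x _ hx => ?_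
          have hx0 : P x = 0 := by simpa using hx
          simp [hx0]
      _ = rc R - rc Qap := by
          rw [hrc]
          exact Finset.sum_sub_distrib _ _
  have h2 : rc μ - rc Qap ≤ ∑ y, μ y * Real.log (Qap y / μ y) := by
    rw [hdiff μ hμr]
    calc ∑ x ∈ Finset.univ.filter (fun x => P x ≠ 0),
          P x * (1/(α-1) * Real.log (rSum α (W x) μ / rSum α (W x) Qap))
        ≤ ∑ x ∈ Finset.univ.filter (fun x => P x ≠ 0),
            P x * ∑ y, T x y * Real.log (Qap y / μ y) := by
          refine Finset.sum_le_sum fun x hx => ?_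
          exact mul_le_mul_of_nonneg_left (hup x (Finset.mem_filter.mp hx).2) (hPnn x)
      _ = ∑ x, P x * ∑ y, T x y * Real.log (Qap y / μ y) := by
          refine Finset.sum_subset (Finset.filter_subset _ _) fun x _ hx => ?_
          have hx0 : P x = 0 := by simpa using hx
          simp [hx0]
      _ = ∑ y, μ y * Real.log (Qap y / μ y) := by
          simp only [Finset.mul_sum]
          rw [Finset.sum_comm]
          refine Finset.sum_congr rfl fun y _ => ?_
          rw [hμ]
          simp only [Finset.sum_mul]
          exact Finset.sum_congr rfl fun x _ => by ring
  -- minimality in real form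
  have h0 : rc Qap ≤ rc μ := by
    have h := hmin μ hμpmf
    rw [hQapcoe, cDiv_eq_coe hαne W μ P hμr] at h
    exact_mod_cast h
  -- fixed point: μ = Qap
  have hfix : ∀ y, μ y = Qap y := by
    by_contra hne
    push_neg at hne
    obtain ⟨y0, hy0⟩ := hne
    have hterm : ∀ y, μ y * Real.log (Qap y / μ y) ≤ Qap y - μ y := by
      intro y
      rcases eq_or_lt_of_le (hμnn y) with h | h
      · rw [← h]
        simpa using (hQappos y).le
      · have hdiv : 0 < Qap y / μ y := div_pos (hQappos y) h
        calc μ y * Real.log (Qap y / μ y) ≤ μ y * (Qap y / μ y - 1) :=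
              mul_le_mul_of_nonneg_left (Real.log_le_sub_one_of_pos hdiv) h.le
          _ = Qap y - μ y := by field_simp
    have hstrict : μ y0 * Real.log (Qap y0 / μ y0) < Qap y0 - μ y0 := by
      rcases eq_or_lt_of_le (hμnn y0) with h | h
      · rw [← h]
        simpa using hQappos y0
      · have hdiv : 0 < Qap y0 / μ y0 := div_pos (hQappos y0) h
        have hne1 : Qap y0 / μ y0 ≠ 1 := by
          intro heq
          apply hy0
          field_simp at heq
          exact heq.symm
        calc μ y0 * Real.log (Qap y0 / μ y0) < μ y0 * (Qap y0 / μ y0 - 1) :=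
              mul_lt_mul_of_pos_left (Real.log_lt_sub_one_of_pos hdiv hne1) h
          _ = Qap y0 - μ y0 := by field_simp
    have hG : ∑ y, μ y * Real.log (Qap y / μ y) < 0 := by
      have hlt := Finset.sum_lt_sum (fun y _ => hterm y) ⟨y0, Finset.mem_univ y0, hstrict⟩
      have hz : ∑ y, (Qap y - μ y) = 0 := by
        rw [Finset.sum_sub_distrib, hQap.2, hμpmf.2]
        ring
      linarith
    linarith
  -- main conclusion
  intro Q hQ
  by_cases hcase : ∀ x, P x ≠ 0 → rSum α (W x) Q ≠ 0
  · -- finite case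
    have hQcoe := cDiv_eq_coe hαne W Q P hcase
    have hQex : ∃ y, Q y ≠ 0 := by
      by_contra h
      push_neg at h
      have := hQ.2
      simp only [h, Finset.sum_const_zero] at this
      exact one_ne_zero this.symm
    obtain ⟨y1, hy1⟩ := hQex
    have hSpos : 0 < rSum α Qap Q :=
      rSum_pos (fun y => (hQappos y).le) hQ.1 ⟨y1, (hQappos y1).ne', hy1⟩
    rw [ge_iff_le, rDiv, if_neg hSpos.ne', hQcoe, hQapcoe, ← EReal.coe_sub,
      EReal.coe_le_coe_iff]
    have hkey := hjensen_x Q hQ.1 hcase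
    have harg : ∑ x ∈ Finset.univ.filter (fun x => P x ≠ 0),
        P x * (rSum α (W x) Q / rSum α (W x) Qap) = rSum α Qap Q := by
      calc ∑ x ∈ Finset.univ.filter (fun x => P x ≠ 0),
            P x * (rSum α (W x) Q / rSum α (W x) Qap)
          = ∑ x, P x * (rSum α (W x) Q / rSum α (W x) Qap) := by
            refine Finset.sum_subset (Finset.filter_subset _ _) fun x _ hx => ?_
            have hx0 : P x = 0 := by simpa using hx
            simp [hx0]
        _ = ∑ x, P x * ∑ y, T x y * (Q y / Qap y) ^ (1 - α) := by
            refine Finset.sum_congr rfl fun x _ => ?_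
            rw [hratio Q hQ.1 x]
        _ = ∑ y, μ y * (Q y / Qap y) ^ (1 - α) := by
            simp only [Finset.mul_sum]
            rw [Finset.sum_comm]
            refine Finset.sum_congr rfl fun y _ => ?_
            rw [hμ]
            simp only [Finset.sum_mul]
            exact Finset.sum_congr rfl fun x _ => by ring
        _ = ∑ y, Qap y * (Q y / Qap y) ^ (1 - α) := by
            simp only [hfix]
        _ = rSum α Qap Q := by
            refine Finset.sum_congr rfl fun y _ => ?_
            rw [Real.div_rpow (hQ.1 y) (hQappos y).le]
            have h1 : Qap y ^ α * Qap y ^ (1-α) = Qap y := by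
              rw [← Real.rpow_add (hQappos y)]
              norm_num
            have h2 : Qap y ^ (1-α) ≠ 0 := (Real.rpow_pos_of_pos (hQappos y) _).ne'
            field_simp
            linear_combination (-(Q y ^ (1 - α))) * h1
    rw [harg] at hkey
    linarith [hkey]
  · -- top case
    push_neg at hcase
    obtain ⟨x0, hx0, h0'⟩ := hcase
    have htop : cDiv α W Q P = ⊤ := by
      refine ereal_sum_eq_top _ _ ?_ ⟨x0, Finset.mem_univ x0, ?_⟩
      · intro x _
        rw [dA, if_neg hαne, rDiv]
        split_ifs with h
        · rcases eq_or_lt_of_le (hPnn x) with hp | hp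
          · rw [← hp]
            simp
          · rw [EReal.coe_mul_top_of_pos hp]
            simp
        · rw [← EReal.coe_mul]
          exact EReal.coe_ne_bot _
      · rw [dA, if_neg hαne, rDiv, if_pos h0',
          EReal.coe_mul_top_of_pos ((hPnn x0).lt_of_ne (Ne.symm hx0))]
    rw [htop, hQapcoe, EReal.top_sub_coe]
    exact le_top
end

section
/- Let W : X → P(Y) with X, Y finite, α ∈ (0,1], and C a nonempty convex set of probability mass functions on X. Then the minimax equality holds: sup_{P ∈ C} inf_Q Σ_x P(x) D_α(W(x)‖Q) = inf_Q sup_{P ∈ C} Σ_x P(x) D_α(W(x)‖Q), where Q ranges over probability mass functions on Y. -/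
open scoped BigOperators

namespace AugustinAux

open Real Set Filter Topology

/-! ### EReal helpers -/

lemma coe_mul_ne_bot (c : ℝ) (hc : 0 ≤ c) {x : EReal} (hx : x ≠ ⊥) : (c : EReal) * x ≠ ⊥ := by
  rcases eq_or_lt_of_le hc with rfl | hc
  · simp
  · induction x with
    | bot => exact absurd rfl hx
    | coe r => rw [← EReal.coe_mul]; exact EReal.coe_ne_bot _
    | top => rw [EReal.coe_mul_top_of_pos hc]; exact top_ne_bot

lemma coe_mul_ne_top (c : ℝ) (hc : 0 ≤ c) {x : EReal} (hx : x ≠ ⊤) : (c : EReal) * x ≠ ⊤ := by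
  rcases eq_or_lt_of_le hc with rfl | hc
  · simp
  · induction x with
    | bot => rw [EReal.coe_mul_bot_of_pos hc]; exact bot_ne_top
    | coe r => rw [← EReal.coe_mul]; exact EReal.coe_ne_top _
    | top => exact absurd rfl hx

lemma sum_ne_bot {ι : Type*} (s : Finset ι) (g : ι → EReal) (h : ∀ i ∈ s, g i ≠ ⊥) :
    ∑ i ∈ s, g i ≠ ⊥ := by
  classical
  induction s using Finset.induction_on with
  | empty => simp
  | @insert a s' hi ih =>
    rw [Finset.sum_insert hi]
    rw [Ne, EReal.add_eq_bot_iff]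
    push_neg
    exact ⟨h a (Finset.mem_insert_self _ _), ih fun i hi' => h i (Finset.mem_insert_of_mem hi')⟩

lemma coe_sum {ι : Type*} (s : Finset ι) (f : ι → ℝ) :
    ((∑ i ∈ s, f i : ℝ) : EReal) = ∑ i ∈ s, (f i : EReal) := by
  classical
  induction s using Finset.induction_on with
  | empty => simp
  | @insert a s' hi ih =>
    rw [Finset.sum_insert hi, Finset.sum_insert hi, EReal.coe_add, ih]

lemma sum_eq_coe_or_top {ι : Type*} (s : Finset ι) (g : ι → EReal) (h : ∀ i ∈ s, g i ≠ ⊥) :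
    (∑ i ∈ s, g i = ⊤ ∧ ∃ i ∈ s, g i = ⊤) ∨ (∑ i ∈ s, g i = ((∑ i ∈ s, (g i).toReal : ℝ) : EReal)) := by
  classical
  by_cases htop : ∃ i ∈ s, g i = ⊤
  · left
    refine ⟨?_, htop⟩
    obtain ⟨i, hi, hgi⟩ := htop
    rw [← Finset.add_sum_erase _ _ hi, hgi]
    rw [EReal.top_add_of_ne_bot]
    exact sum_ne_bot _ _ fun j hj => h j (Finset.mem_of_mem_erase hj)
  · right
    push_neg at htop
    rw [coe_sum]
    refine Finset.sum_congr rfl fun i hi => ?_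
    exact (EReal.coe_toReal (htop i hi) (h i hi)).symm

end AugustinAux

namespace AugustinAux2
open Real Set Filter Topology AugustinAux

variable {Y : Type*} [Fintype Y]

lemma dA_ne_bot (α : ℝ) (W Q : Y → ℝ) : dA α W Q ≠ ⊥ := by
  unfold dA kDiv rDiv
  split_ifs <;> simp [← EReal.coe_mul]

lemma rSum_nonneg (α : ℝ) {W Q : Y → ℝ} (hW : ∀ y, 0 ≤ W y) (hQ : ∀ y, 0 ≤ Q y) :
    0 ≤ rSum α W Q :=
  Finset.sum_nonneg fun y _ => mul_nonneg (Real.rpow_nonneg (hW y) _) (Real.rpow_nonneg (hQ y) _)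

lemma rSum_le_one {α : ℝ} {W Q : Y → ℝ} (hα0 : 0 < α) (hα1 : α < 1)
    (hW : IsPMF W) (hQ : IsPMF Q) : rSum α W Q ≤ 1 := by
  have key : ∀ y, W y ^ α * Q y ^ (1-α) ≤ α * W y + (1-α) * Q y := fun y =>
    Real.geom_mean_le_arith_mean2_weighted hα0.le (by linarith) (hW.1 y) (hQ.1 y) (by ring)
  calc rSum α W Q ≤ ∑ y, (α * W y + (1-α) * Q y) := Finset.sum_le_sum fun y _ => key y
  _ = 1 := by rw [Finset.sum_add_distrib, ← Finset.mul_sum, ← Finset.mul_sum, hW.2, hQ.2]; ring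

lemma exists_pos_of_pmf {W : Y → ℝ} (hW : IsPMF W) : ∃ y, 0 < W y := by
  by_contra h
  push_neg at h
  have h0 : ∀ y ∈ Finset.univ, W y = 0 := fun y _ => le_antisymm (h y) (hW.1 y)
  have hW2 := hW.2
  rw [Finset.sum_eq_zero h0] at hW2
  exact one_ne_zero hW2.symm

lemma rSum_pos {α : ℝ} {W Q : Y → ℝ} (hα0 : 0 < α) (hα1 : α < 1)
    (hW : IsPMF W) (hQ : ∀ y, 0 < Q y) : 0 < rSum α W Q := by
  obtain ⟨y0, hy0⟩ := exists_pos_of_pmf hW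
  have hterm : 0 < W y0 ^ α * Q y0 ^ (1-α) :=
    mul_pos (Real.rpow_pos_of_pos hy0 _) (Real.rpow_pos_of_pos (hQ y0) _)
  exact lt_of_lt_of_le hterm (Finset.single_le_sum
    (fun y _ => mul_nonneg (Real.rpow_nonneg (hW.1 y) _) (Real.rpow_nonneg (hQ y).le _))
    (Finset.mem_univ y0))

lemma kDiv_nonneg {W Q : Y → ℝ} (hW : IsPMF W) (hQ : IsPMF Q) : 0 ≤ kDiv W Q := by
  unfold kDiv
  split_ifs with hac
  · rw [show ((0:EReal) = ((0:ℝ) : EReal)) by simp]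
    rw [EReal.coe_le_coe_iff]
    have key : ∀ y ∈ Finset.univ, (if W y = 0 then 0 else W y - Q y)
        ≤ (if W y = 0 then (0:ℝ) else W y * Real.log (W y / Q y)) := by
      intro y _
      by_cases hw : W y = 0
      · simp [hw]
      · simp only [hw, if_false]
        have hw' : 0 < W y := (hW.1 y).lt_of_ne (Ne.symm hw)
        have hq' : 0 < Q y := by
          rcases (hQ.1 y).lt_or_eq with h | h
          · exact h
          · exact absurd (hac y h.symm) hw
        have hlog : Real.log (Q y / W y) ≤ Q y / W y - 1 :=
          Real.log_le_sub_one_of_pos (div_pos hq' hw')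
        have hinv : Real.log (W y / Q y) = - Real.log (Q y / W y) := by
          rw [← Real.log_inv]
          congr 1
          field_simp
        rw [hinv]
        have h2 := mul_le_mul_of_nonneg_left hlog hw'.le
        have heq : W y * (Q y / W y - 1) = Q y - W y := by field_simp
        nlinarith
    have h1 := Finset.sum_le_sum key
    have h2 : (0:ℝ) ≤ ∑ y, if W y = 0 then 0 else W y - Q y := by
      have hsplit : (∑ y, if W y = 0 then (0:ℝ) else W y - Q y)
          = (∑ y, W y) - ∑ y, (if W y = 0 then 0 else Q y) := by
        rw [← Finset.sum_sub_distrib]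
        refine Finset.sum_congr rfl fun y _ => ?_
        by_cases hw : W y = 0 <;> simp [hw]
      have hle : (∑ y, if W y = 0 then (0:ℝ) else Q y) ≤ ∑ y, Q y :=
        Finset.sum_le_sum fun y _ => by by_cases hw : W y = 0 <;> simp [hw, hQ.1 y]
      rw [hQ.2] at hle
      rw [hsplit, hW.2]
      linarith
    linarith
  · exact le_top

lemma rDiv_nonneg {α : ℝ} {W Q : Y → ℝ} (hα0 : 0 < α) (hα1 : α < 1)
    (hW : IsPMF W) (hQ : IsPMF Q) : 0 ≤ rDiv α W Q := by
  unfold rDiv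
  split_ifs with h0
  · exact le_top
  · have hpos : 0 < rSum α W Q := (rSum_nonneg α hW.1 hQ.1).lt_of_ne (Ne.symm h0)
    rw [show ((0:EReal) = ((0:ℝ) : EReal)) by simp, EReal.coe_le_coe_iff]
    have hlog : Real.log (rSum α W Q) ≤ 0 := Real.log_nonpos hpos.le (rSum_le_one hα0 hα1 hW hQ)
    have hc : 1/(α-1) ≤ 0 := le_of_lt (div_neg_of_pos_of_neg one_pos (by linarith))
    nlinarith

lemma dA_nonneg {α : ℝ} {W Q : Y → ℝ} (hα : α ∈ Set.Ioc (0:ℝ) 1)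
    (hW : IsPMF W) (hQ : IsPMF Q) : 0 ≤ dA α W Q := by
  unfold dA
  split_ifs with h1
  · exact kDiv_nonneg hW hQ
  · exact rDiv_nonneg hα.1 (lt_of_le_of_ne hα.2 h1) hW hQ

lemma dA_ne_top_of_pos {α : ℝ} {W Q : Y → ℝ} (hα : α ∈ Set.Ioc (0:ℝ) 1)
    (hW : IsPMF W) (hQ : ∀ y, 0 < Q y) : dA α W Q ≠ ⊤ := by
  unfold dA
  split_ifs with h1
  · unfold kDiv
    rw [if_pos fun y hy => absurd hy (hQ y).ne']
    exact EReal.coe_ne_top _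
  · unfold rDiv
    rw [if_neg (rSum_pos hα.1 (lt_of_le_of_ne hα.2 h1) hW hQ).ne']
    exact EReal.coe_ne_top _

end AugustinAux2

namespace AugustinAux3
open Real Set Filter Topology AugustinAux AugustinAux2

variable {Y : Type*} [Fintype Y]

lemma kDiv_ne_bot (W Q : Y → ℝ) : kDiv W Q ≠ ⊥ := by
  unfold kDiv; split_ifs <;> simp

lemma rDiv_ne_bot (α : ℝ) (W Q : Y → ℝ) : rDiv α W Q ≠ ⊥ := by
  unfold rDiv; split_ifs <;> simp [← EReal.coe_mul]

lemma mix_pmf {Q Q' : Y → ℝ} (hQ : IsPMF Q) (hQ' : IsPMF Q') {a b : ℝ}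
    (ha : 0 ≤ a) (hb : 0 ≤ b) (hab : a + b = 1) :
    IsPMF (fun y => a * Q y + b * Q' y) := by
  constructor
  · exact fun y => add_nonneg (mul_nonneg ha (hQ.1 y)) (mul_nonneg hb (hQ'.1 y))
  · rw [Finset.sum_add_distrib, ← Finset.mul_sum, ← Finset.mul_sum, hQ.2, hQ'.2]
    simpa using hab

lemma kDiv_convex {W Q Q' : Y → ℝ} (hW : IsPMF W) (hQ : IsPMF Q) (hQ' : IsPMF Q')
    {a b : ℝ} (ha : 0 < a) (hb : 0 < b) (hab : a + b = 1) :
    kDiv W (fun y => a * Q y + b * Q' y) ≤ (a : EReal) * kDiv W Q + (b : EReal) * kDiv W Q' := by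
  by_cases hac : ∀ y, Q y = 0 → W y = 0
  · by_cases hac' : ∀ y, Q' y = 0 → W y = 0
    · have hacm : ∀ y, a * Q y + b * Q' y = 0 → W y = 0 := by
        intro y hy
        have h1 : a * Q y = 0 := by nlinarith [mul_nonneg ha.le (hQ.1 y), mul_nonneg hb.le (hQ'.1 y)]
        exact hac y (by nlinarith [hQ.1 y])
      unfold kDiv
      rw [if_pos hacm, if_pos hac, if_pos hac']
      rw [← EReal.coe_mul, ← EReal.coe_mul, ← EReal.coe_add, EReal.coe_le_coe_iff]
      rw [Finset.mul_sum, Finset.mul_sum, ← Finset.sum_add_distrib]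
      refine Finset.sum_le_sum fun y _ => ?_
      beta_reduce
      by_cases hw : W y = 0
      · simp [hw]
      · simp only [hw, if_false]
        have hw' : 0 < W y := (hW.1 y).lt_of_ne (Ne.symm hw)
        have hq1 : 0 < Q y := by
          rcases (hQ.1 y).lt_or_eq with h | h
          · exact h
          · exact absurd (hac y h.symm) hw
        have hq2 : 0 < Q' y := by
          rcases (hQ'.1 y).lt_or_eq with h | h
          · exact h
          · exact absurd (hac' y h.symm) hw
        have hqm : 0 < a * Q y + b * Q' y := by positivity
        have hconc : a * Real.log (Q y) + b * Real.log (Q' y)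
            ≤ Real.log (a * Q y + b * Q' y) := by
          have := (strictConcaveOn_log_Ioi.concaveOn).2 (Set.mem_Ioi.2 hq1)
            (Set.mem_Ioi.2 hq2) ha.le hb.le hab
          simpa [smul_eq_mul] using this
        rw [Real.log_div hw hqm.ne', Real.log_div hw hq1.ne', Real.log_div hw hq2.ne']
        have h5 := mul_le_mul_of_nonneg_left hconc hw'.le
        have hexp : a * (W y * (Real.log (W y) - Real.log (Q y)))
            + b * (W y * (Real.log (W y) - Real.log (Q' y)))
            = (a + b) * (W y * Real.log (W y))
              - W y * (a * Real.log (Q y) + b * Real.log (Q' y)) := by ring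
        rw [hab] at hexp
        nlinarith
    · have h1 : kDiv W Q' = ⊤ := by unfold kDiv; rw [if_neg hac']
      rw [h1, EReal.coe_mul_top_of_pos hb, EReal.add_top_of_ne_bot
        (coe_mul_ne_bot a ha.le (kDiv_ne_bot W Q))]
      exact le_top
  · have h1 : kDiv W Q = ⊤ := by unfold kDiv; rw [if_neg hac]
    rw [h1, EReal.coe_mul_top_of_pos ha, EReal.top_add_of_ne_bot
      (coe_mul_ne_bot b hb.le (kDiv_ne_bot W Q'))]
    exact le_top

lemma rDiv_convex {α : ℝ} {W Q Q' : Y → ℝ} (hα0 : 0 < α) (hα1 : α < 1)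
    (hW : IsPMF W) (hQ : IsPMF Q) (hQ' : IsPMF Q')
    {a b : ℝ} (ha : 0 < a) (hb : 0 < b) (hab : a + b = 1) :
    rDiv α W (fun y => a * Q y + b * Q' y) ≤ (a : EReal) * rDiv α W Q + (b : EReal) * rDiv α W Q' := by
  by_cases hS1 : rSum α W Q = 0
  · have h1 : rDiv α W Q = ⊤ := by unfold rDiv; rw [if_pos hS1]
    rw [h1, EReal.coe_mul_top_of_pos ha, EReal.top_add_of_ne_bot
      (coe_mul_ne_bot b hb.le (rDiv_ne_bot α W Q'))]
    exact le_top
  by_cases hS2 : rSum α W Q' = 0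
  · have h1 : rDiv α W Q' = ⊤ := by unfold rDiv; rw [if_pos hS2]
    rw [h1, EReal.coe_mul_top_of_pos hb, EReal.add_top_of_ne_bot
      (coe_mul_ne_bot a ha.le (rDiv_ne_bot α W Q))]
    exact le_top
  have hS1p : 0 < rSum α W Q := (rSum_nonneg α hW.1 hQ.1).lt_of_ne (Ne.symm hS1)
  have hS2p : 0 < rSum α W Q' := (rSum_nonneg α hW.1 hQ'.1).lt_of_ne (Ne.symm hS2)
  have hconc : a * rSum α W Q + b * rSum α W Q' ≤ rSum α W (fun y => a * Q y + b * Q' y) := by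
    unfold rSum
    rw [Finset.mul_sum, Finset.mul_sum, ← Finset.sum_add_distrib]
    refine Finset.sum_le_sum fun y _ => ?_
    beta_reduce
    have hr := (Real.concaveOn_rpow (by linarith : (0:ℝ) ≤ 1 - α) (by linarith)).2
      (Set.mem_Ici.2 (hQ.1 y)) (Set.mem_Ici.2 (hQ'.1 y)) ha.le hb.le hab
    simp only [smul_eq_mul] at hr
    have hwn : 0 ≤ W y ^ α := Real.rpow_nonneg (hW.1 y) _
    nlinarith [mul_le_mul_of_nonneg_left hr hwn]
  have hSm : 0 < rSum α W (fun y => a * Q y + b * Q' y) :=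
    lt_of_lt_of_le (by positivity) hconc
  unfold rDiv
  rw [if_neg hSm.ne', if_neg hS1, if_neg hS2]
  rw [← EReal.coe_mul, ← EReal.coe_mul, ← EReal.coe_add, EReal.coe_le_coe_iff]
  have hlog1 : a * Real.log (rSum α W Q) + b * Real.log (rSum α W Q')
      ≤ Real.log (rSum α W (fun y => a * Q y + b * Q' y)) := by
    have hcc : a * Real.log (rSum α W Q) + b * Real.log (rSum α W Q')
        ≤ Real.log (a * rSum α W Q + b * rSum α W Q') := by
      have := (strictConcaveOn_log_Ioi.concaveOn).2 (Set.mem_Ioi.2 hS1p)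
        (Set.mem_Ioi.2 hS2p) ha.le hb.le hab
      simpa [smul_eq_mul] using this
    have := (Real.log_le_log_iff (by positivity) hSm).2 hconc
    linarith
  have hcneg : 1/(α-1) < 0 := div_neg_of_pos_of_neg one_pos (by linarith)
  have h4 := mul_le_mul_of_nonneg_left hlog1 (by linarith : (0:ℝ) ≤ -(1/(α-1)))
  nlinarith [h4]

lemma dA_convex {α : ℝ} {W Q Q' : Y → ℝ} (hα : α ∈ Set.Ioc (0:ℝ) 1)
    (hW : IsPMF W) (hQ : IsPMF Q) (hQ' : IsPMF Q')
    {a b : ℝ} (ha : 0 ≤ a) (hb : 0 ≤ b) (hab : a + b = 1) :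
    dA α W (fun y => a * Q y + b * Q' y) ≤ (a : EReal) * dA α W Q + (b : EReal) * dA α W Q' := by
  rcases eq_or_lt_of_le ha with rfl | ha'
  · have hb1 : b = 1 := by linarith
    subst hb1
    have : (fun y => 0 * Q y + 1 * Q' y) = Q' := by funext y; ring
    rw [this]
    simp
  rcases eq_or_lt_of_le hb with rfl | hb'
  · have ha1 : a = 1 := by linarith
    subst ha1
    have : (fun y => 1 * Q y + 0 * Q' y) = Q := by funext y; ring
    rw [this]
    simp
  unfold dA
  split_ifs with h1
  · exact kDiv_convex hW hQ hQ' ha' hb' hab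
  · exact rDiv_convex hα.1 (lt_of_le_of_ne hα.2 h1) hW hQ hQ' ha' hb' hab

end AugustinAux3

namespace AugustinAux4
open Real Set Filter Topology AugustinAux AugustinAux2 AugustinAux3

variable {X Y : Type*} [Fintype X] [Fintype Y]

lemma coe_mul_sum {ι : Type*} (s : Finset ι) (c : ℝ) (hc : 0 ≤ c) (g : ι → EReal)
    (hg : ∀ i ∈ s, 0 ≤ g i) : ∑ i ∈ s, (c : EReal) * g i = (c : EReal) * ∑ i ∈ s, g i := by
  classical
  induction s using Finset.induction_on with
  | empty => simp
  | @insert a s' hi ih =>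
    rw [Finset.sum_insert hi, Finset.sum_insert hi,
      EReal.left_distrib_of_nonneg (hg a (Finset.mem_insert_self _ _))
        (Finset.sum_nonneg fun i hi' => hg i (Finset.mem_insert_of_mem hi')),
      ih fun i hi' => hg i (Finset.mem_insert_of_mem hi')]

lemma coe_sum_mul {ι : Type*} (s : Finset ι) (c : ι → ℝ) (hc : ∀ i ∈ s, 0 ≤ c i)
    (d : EReal) : ((∑ i ∈ s, c i : ℝ) : EReal) * d = ∑ i ∈ s, (c i : EReal) * d := by
  classical
  induction s using Finset.induction_on with
  | empty => simp
  | @insert a s' hi ih =>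
    rw [Finset.sum_insert hi, Finset.sum_insert hi, EReal.coe_add,
      EReal.right_distrib_of_nonneg (by exact_mod_cast hc a (Finset.mem_insert_self _ _))
        (by exact_mod_cast Finset.sum_nonneg fun i hi' => hc i (Finset.mem_insert_of_mem hi')),
      ih fun i hi' => hc i (Finset.mem_insert_of_mem hi')]

lemma cDiv_ne_bot (α : ℝ) (W : X → Y → ℝ) (Q : Y → ℝ) {P : X → ℝ} (hP : ∀ x, 0 ≤ P x) :
    cDiv α W Q P ≠ ⊥ :=
  sum_ne_bot _ _ fun x _ => coe_mul_ne_bot _ (hP x) (dA_ne_bot α (W x) Q)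

lemma cDiv_nonneg {α : ℝ} (hα : α ∈ Set.Ioc (0:ℝ) 1) {W : X → Y → ℝ} (hW : ∀ x, IsPMF (W x))
    {Q : Y → ℝ} (hQ : IsPMF Q) {P : X → ℝ} (hP : ∀ x, 0 ≤ P x) : 0 ≤ cDiv α W Q P :=
  Finset.sum_nonneg fun x _ => mul_nonneg (by exact_mod_cast hP x) (dA_nonneg hα (hW x) hQ)

lemma cDiv_ne_top_of_pos {α : ℝ} (hα : α ∈ Set.Ioc (0:ℝ) 1) {W : X → Y → ℝ}
    (hW : ∀ x, IsPMF (W x)) {Q : Y → ℝ} (hQ : ∀ y, 0 < Q y) {P : X → ℝ} (hP : ∀ x, 0 ≤ P x) :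
    cDiv α W Q P ≠ ⊤ := by
  unfold cDiv
  rcases sum_eq_coe_or_top Finset.univ (fun x => (P x : EReal) * dA α (W x) Q)
    (fun x _ => coe_mul_ne_bot _ (hP x) (dA_ne_bot α (W x) Q)) with ⟨_, x, _, hx⟩ | h
  · exact absurd hx (coe_mul_ne_top _ (hP x) (dA_ne_top_of_pos hα (hW x) hQ))
  · rw [h]; exact EReal.coe_ne_top _

lemma cDiv_convex {α : ℝ} (hα : α ∈ Set.Ioc (0:ℝ) 1) {W : X → Y → ℝ} (hW : ∀ x, IsPMF (W x))
    {Q Q' : Y → ℝ} (hQ : IsPMF Q) (hQ' : IsPMF Q') {P : X → ℝ} (hP : ∀ x, 0 ≤ P x)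
    {a b : ℝ} (ha : 0 ≤ a) (hb : 0 ≤ b) (hab : a + b = 1) :
    cDiv α W (fun y => a * Q y + b * Q' y) P
      ≤ (a : EReal) * cDiv α W Q P + (b : EReal) * cDiv α W Q' P := by
  unfold cDiv
  have key : ∀ x ∈ Finset.univ, (P x : EReal) * dA α (W x) (fun y => a * Q y + b * Q' y)
      ≤ (a : EReal) * ((P x : EReal) * dA α (W x) Q)
        + (b : EReal) * ((P x : EReal) * dA α (W x) Q') := by
    intro x _
    have h1 : (P x : EReal) * dA α (W x) (fun y => a * Q y + b * Q' y)
        ≤ (P x : EReal) * ((a : EReal) * dA α (W x) Q + (b : EReal) * dA α (W x) Q') :=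
      mul_le_mul_of_nonneg_left (dA_convex hα (hW x) hQ hQ' ha hb hab) (by exact_mod_cast hP x)
    refine le_trans h1 (le_of_eq ?_)
    rw [EReal.left_distrib_of_nonneg
      (mul_nonneg (by exact_mod_cast ha) (dA_nonneg hα (hW x) hQ))
      (mul_nonneg (by exact_mod_cast hb) (dA_nonneg hα (hW x) hQ'))]
    rw [mul_left_comm ((P x : EReal)), mul_left_comm ((P x : EReal))]
  refine le_trans (Finset.sum_le_sum key) (le_of_eq ?_)
  rw [Finset.sum_add_distrib,
    coe_mul_sum _ a ha _ (fun x _ => mul_nonneg (by exact_mod_cast hP x) (dA_nonneg hα (hW x) hQ)),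
    coe_mul_sum _ b hb _ (fun x _ => mul_nonneg (by exact_mod_cast hP x) (dA_nonneg hα (hW x) hQ'))]

lemma cDiv_affine {ι : Type*} [Fintype ι] {α : ℝ} (hα : α ∈ Set.Ioc (0:ℝ) 1)
    {W : X → Y → ℝ} (hW : ∀ x, IsPMF (W x)) {Q : Y → ℝ} (hQ : IsPMF Q)
    (lam : ι → ℝ) (hlam : ∀ i, 0 ≤ lam i) (P : ι → X → ℝ) (hP : ∀ i x, 0 ≤ P i x) :
    cDiv α W Q (fun x => ∑ i, lam i * P i x) = ∑ i, (lam i : EReal) * cDiv α W Q (P i) := by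
  unfold cDiv
  calc ∑ x, ((∑ i, lam i * P i x : ℝ) : EReal) * dA α (W x) Q
      = ∑ x, ∑ i, ((lam i * P i x : ℝ) : EReal) * dA α (W x) Q :=
        Finset.sum_congr rfl fun x _ => coe_sum_mul _ _
          (fun i _ => mul_nonneg (hlam i) (hP i x)) _
  _ = ∑ i, ∑ x, ((lam i * P i x : ℝ) : EReal) * dA α (W x) Q := Finset.sum_comm
  _ = ∑ i, (lam i : EReal) * ∑ x, (P i x : EReal) * dA α (W x) Q := by
      refine Finset.sum_congr rfl fun i _ => ?_
      rw [← coe_mul_sum _ (lam i) (hlam i) _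
        (fun x _ => mul_nonneg (by exact_mod_cast hP i x) (dA_nonneg hα (hW x) hQ))]
      refine Finset.sum_congr rfl fun x _ => ?_
      rw [EReal.coe_mul, mul_assoc]

end AugustinAux4

namespace AugustinAux5
open Real Set Filter Topology AugustinAux AugustinAux2 AugustinAux3 AugustinAux4

variable {X Y : Type*} [Fintype X] [Fintype Y]

noncomputable def unif (Y : Type*) [Fintype Y] : Y → ℝ := fun _ => 1 / Fintype.card Y

lemma unif_pos [Nonempty Y] : ∀ y : Y, 0 < unif Y y := fun _ => by
  unfold unif
  have : 0 < Fintype.card Y := Fintype.card_pos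
  positivity

lemma unif_pmf [Nonempty Y] : IsPMF (unif Y) := by
  constructor
  · exact fun y => (unif_pos y).le
  · unfold unif
    rw [Finset.sum_const, Finset.card_univ, nsmul_eq_mul]
    have : (0:ℝ) < Fintype.card Y := by exact_mod_cast Fintype.card_pos
    field_simp

lemma le_cDiv_of_le_on_pos [Nonempty Y] {α : ℝ} (hα : α ∈ Set.Ioc (0:ℝ) 1)
    {W : X → Y → ℝ} (hW : ∀ x, IsPMF (W x)) {P : X → ℝ} (hP : ∀ x, 0 ≤ P x) {c : ℝ}
    (h : ∀ Q : Y → ℝ, IsPMF Q → (∀ y, 0 < Q y) → (c : EReal) ≤ cDiv α W Q P) :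
    ∀ Q : Y → ℝ, IsPMF Q → (c : EReal) ≤ cDiv α W Q P := by
  intro Q hQ
  by_cases htop : cDiv α W Q P = ⊤
  · rw [htop]; exact le_top
  have hbot := cDiv_ne_bot α W Q hP
  set r := (cDiv α W Q P).toReal with hrdef
  have hr : cDiv α W Q P = (r : EReal) := (EReal.coe_toReal htop hbot).symm
  have hutop := cDiv_ne_top_of_pos hα hW unif_pos hP
  have hubot := cDiv_ne_bot α W (unif Y) hP
  set u := (cDiv α W (unif Y) P).toReal with hudef
  have hu : cDiv α W (unif Y) P = (u : EReal) := (EReal.coe_toReal hutop hubot).symm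
  rw [hr, EReal.coe_le_coe_iff]
  by_contra hlt
  push_neg at hlt
  have key : ∀ t : ℝ, 0 < t → t ≤ 1 → c ≤ (1-t) * r + t * u := by
    intro t ht0 ht1
    have hmixpmf : IsPMF (fun y => (1-t) * Q y + t * unif Y y) :=
      mix_pmf hQ unif_pmf (by linarith) ht0.le (by ring)
    have hmixpos : ∀ y, 0 < (1-t) * Q y + t * unif Y y := fun y =>
      add_pos_of_nonneg_of_pos (mul_nonneg (by linarith) (hQ.1 y)) (mul_pos ht0 (unif_pos y))
    have h1 := h _ hmixpmf hmixpos
    have h2 := cDiv_convex hα hW hQ unif_pmf hP (by linarith : (0:ℝ) ≤ 1 - t) ht0.le (by ring)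
    rw [hr, hu, ← EReal.coe_mul, ← EReal.coe_mul, ← EReal.coe_add] at h2
    exact EReal.coe_le_coe_iff.1 (le_trans h1 h2)
  set M := |u - r| + 1 with hMdef
  have hM0 : 0 < M := by positivity
  have hM : u - r ≤ M := by
    have := le_abs_self (u - r); linarith
  set t := min 1 ((c - r)/(2*M)) with htdef
  have ht0 : 0 < t := lt_min one_pos (div_pos (by linarith) (by positivity))
  have ht1 : t ≤ 1 := min_le_left _ _
  have hk := key t ht0 ht1
  have h5 : t ≤ (c-r)/(2*M) := min_le_right _ _
  have h6 : t * (u - r) ≤ t * M := mul_le_mul_of_nonneg_left hM ht0.le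
  have h7 : t * M ≤ (c-r)/(2*M) * M := mul_le_mul_of_nonneg_right h5 hM0.le
  have h8 : (c-r)/(2*M) * M = (c-r)/2 := by field_simp
  nlinarith

end AugustinAux5

namespace AugustinAux6
open Real Set Filter Topology AugustinAux AugustinAux2 AugustinAux3 AugustinAux4 AugustinAux5

variable {X Y : Type*} [Fintype X] [Fintype Y]

lemma rSum_continuous {α : ℝ} (hα1 : α < 1) (W : Y → ℝ) :
    Continuous (fun Q : Y → ℝ => rSum α W Q) := by
  unfold rSum
  refine continuous_finset_sum _ fun y _ => continuous_const.mul ?_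
  exact (continuous_apply y).rpow_const (fun Q => Or.inr (by linarith))

lemma coe_mul_lt_coe_mul {c m : ℝ} (hc : 0 < c) {u : EReal} (hm : (m : EReal) < u) :
    ((c * m : ℝ) : EReal) < (c : EReal) * u := by
  induction u with
  | bot => exact absurd hm (by simp)
  | coe r =>
    rw [← EReal.coe_mul]
    exact_mod_cast mul_lt_mul_of_pos_left (by exact_mod_cast hm) hc
  | top => rw [EReal.coe_mul_top_of_pos hc]; exact EReal.coe_lt_top _

lemma rDiv_lscAt {α : ℝ} (hα1 : α < 1) (W : Y → ℝ) (Q0 : Y → ℝ) :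
    LowerSemicontinuousAt (fun Q => rDiv α W Q) Q0 := by
  have hcst : 1/(α-1) < 0 := div_neg_of_pos_of_neg one_pos (by linarith)
  have hcont : ContinuousAt (fun Q : Y → ℝ => rSum α W Q) Q0 :=
    (rSum_continuous hα1 W).continuousAt
  intro z hz
  induction z with
  | bot => exact Filter.Eventually.of_forall fun Q => bot_lt_iff_ne_bot.2 (rDiv_ne_bot α W Q)
  | top => exact absurd hz (not_top_lt)
  | coe zr =>
    beta_reduce at hz
    by_cases h0 : rSum α W Q0 = 0
    · set ε := Real.exp ((zr + 1)/(1/(α-1))) with hεdef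
      have hε : 0 < ε := Real.exp_pos _
      have hev : ∀ᶠ Q in 𝓝 Q0, |rSum α W Q| < ε := by
        have h1 : Tendsto (fun Q : Y → ℝ => rSum α W Q) (𝓝 Q0) (𝓝 0) := by
          rw [← h0]; exact hcont
        have h2 : {s : ℝ | |s| < ε} ∈ 𝓝 (0:ℝ) := by
          have : IsOpen {s : ℝ | |s| < ε} := isOpen_lt (continuous_abs) continuous_const
          exact this.mem_nhds (by simp [hε])
        exact h1.eventually h2
      refine hev.mono fun Q hQ => ?_
      show (zr : EReal) < rDiv α W Q
      unfold rDiv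
      split_ifs with hS
      · exact EReal.coe_lt_top _
      · rw [EReal.coe_lt_coe_iff]
        have habs : 0 < |rSum α W Q| := abs_pos.2 hS
        have hlog : Real.log (rSum α W Q) < (zr + 1)/(1/(α-1)) := by
          rw [← Real.log_abs]
          calc Real.log |rSum α W Q| < Real.log ε := Real.log_lt_log habs hQ
          _ = (zr + 1)/(1/(α-1)) := Real.log_exp _
        have := mul_lt_mul_of_neg_left hlog hcst
        have hcancel : 1/(α-1) * ((zr + 1)/(1/(α-1))) = zr + 1 := by
          have hne : α - 1 ≠ 0 := by linarith
          field_simp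
        rw [hcancel] at this
        linarith
    · have hval : rDiv α W Q0 = ((1/(α-1) * Real.log (rSum α W Q0) : ℝ) : EReal) := by
        unfold rDiv; rw [if_neg h0]
      rw [hval, gt_iff_lt, EReal.coe_lt_coe_iff] at hz
      have hca : ContinuousAt (fun Q : Y → ℝ => 1/(α-1) * Real.log (rSum α W Q)) Q0 :=
        continuousAt_const.mul (hcont.log h0)
      have hev1 : ∀ᶠ Q in 𝓝 Q0, zr < 1/(α-1) * Real.log (rSum α W Q) :=
        hca.eventually (eventually_gt_nhds hz)
      have hev2 : ∀ᶠ Q in 𝓝 Q0, rSum α W Q ≠ 0 := hcont.eventually_ne h0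
      filter_upwards [hev1, hev2] with Q h1 h2
      show (zr : EReal) < rDiv α W Q
      unfold rDiv
      rw [if_neg h2]
      exact_mod_cast h1

lemma kDiv_lscAt {W : Y → ℝ} (hW : IsPMF W) {Q0 : Y → ℝ} (hQ0 : ∀ y, 0 ≤ Q0 y) :
    LowerSemicontinuousAt (fun Q => kDiv W Q) Q0 := by
  classical
  intro z hz
  induction z with
  | bot => exact Filter.Eventually.of_forall fun Q => bot_lt_iff_ne_bot.2 (by
      show kDiv W Q ≠ ⊥
      unfold kDiv; split_ifs <;> simp)
  | top => exact absurd hz not_top_lt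
  | coe zr =>
    beta_reduce at hz
    set F : (Y → ℝ) → ℝ := fun Q => ∑ y, if W y = 0 then 0 else W y * Real.log (W y / Q y)
      with hFdef
    by_cases hac : ∀ y, Q0 y = 0 → W y = 0
    · have hval : kDiv W Q0 = ((F Q0 : ℝ) : EReal) := by unfold kDiv; rw [if_pos hac]
      rw [hval, gt_iff_lt, EReal.coe_lt_coe_iff] at hz
      have hFcont : ContinuousAt F Q0 := by
        refine tendsto_finset_sum _ fun y _ => ?_
        by_cases hw : W y = 0
        · simp only [if_pos hw]
          exact tendsto_const_nhds
        · simp only [if_neg hw]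
          have hq0 : 0 < Q0 y := by
            rcases (hQ0 y).lt_or_eq with h | h
            · exact h
            · exact absurd (hac y h.symm) hw
          have harg : ContinuousAt (fun Q : Y → ℝ => W y / Q y) Q0 :=
            continuousAt_const.div (continuous_apply y).continuousAt hq0.ne'
          have hcomp : ContinuousAt (fun Q : Y → ℝ => Real.log (W y / Q y)) Q0 :=
            harg.log (div_ne_zero hw hq0.ne')
          exact continuousAt_const.mul hcomp
      have hev1 : ∀ᶠ Q in 𝓝 Q0, zr < F Q := hFcont.eventually (eventually_gt_nhds hz)
      have hev2 : ∀ᶠ Q in 𝓝 Q0, ∀ y, W y ≠ 0 → 0 < Q y := by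
        rw [eventually_all]
        intro y
        by_cases hw : W y = 0
        · exact Filter.Eventually.of_forall fun Q h => absurd hw h
        · have hq0 : 0 < Q0 y := by
            rcases (hQ0 y).lt_or_eq with h | h
            · exact h
            · exact absurd (hac y h.symm) hw
          have := (continuous_apply y).continuousAt (x := Q0)
          exact (this.eventually (eventually_gt_nhds hq0)).mono fun Q h _ => h
      filter_upwards [hev1, hev2] with Q h1 h2
      show (zr : EReal) < kDiv W Q
      have hcond : ∀ y, Q y = 0 → W y = 0 := by
        intro y hy
        by_contra hw
        exact absurd hy (h2 y hw).ne'
      unfold kDiv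
      rw [if_pos hcond]
      exact_mod_cast h1
    · push_neg at hac
      obtain ⟨ys, hys0, hysW⟩ := hac
      have hws : 0 < W ys := (hW.1 ys).lt_of_ne (Ne.symm hysW)
      set m : Y → ℝ := fun y => if W y = 0 then 0 else
        (if Q0 y = 0 then W y * Real.log (W y) else W y * Real.log (W y / Q0 y) - 1) with hmdef
      set M : ℝ := ∑ y ∈ Finset.univ.erase ys, m y with hMdef
      set L : ℝ := Real.log (W ys) - (zr - M)/(W ys) with hLdef
      set δ : ℝ := Real.exp L with hδdef
      have hδ : 0 < δ := Real.exp_pos _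
      -- eventual facts
      have hev1 : ∀ᶠ Q in 𝓝 Q0, |Q ys| < δ := by
        have h1 : Tendsto (fun Q : Y → ℝ => Q ys) (𝓝 Q0) (𝓝 0) := by
          rw [← hys0]; exact (continuous_apply ys).continuousAt
        have h2 : {s : ℝ | |s| < δ} ∈ 𝓝 (0:ℝ) :=
          (isOpen_lt continuous_abs continuous_const).mem_nhds (by simp [hδ])
        exact h1.eventually h2
      have hev2 : ∀ᶠ Q in 𝓝 Q0, ∀ y, |Q y| < max 1 (|Q0 y| + 1) := by
        rw [eventually_all]
        intro y
        have hcy : ContinuousAt (fun Q : Y → ℝ => |Q y|) Q0 :=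
          (continuous_abs.comp (continuous_apply y)).continuousAt
        refine hcy.eventually (eventually_lt_nhds ?_)
        exact lt_max_of_lt_right (lt_add_one _)
      have hev3 : ∀ᶠ Q in 𝓝 Q0, ∀ y, (W y ≠ 0 ∧ Q0 y ≠ 0) →
          W y * Real.log (W y / Q0 y) - 1 < W y * Real.log (W y / Q y) := by
        rw [eventually_all]
        intro y
        by_cases hcase : W y ≠ 0 ∧ Q0 y ≠ 0
        · obtain ⟨hw, hq⟩ := hcase
          have hdiv : ContinuousAt (fun Q : Y → ℝ => W y / Q y) Q0 :=
            continuousAt_const.div (continuous_apply y).continuousAt hq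
          have hcomp : ContinuousAt (fun Q : Y → ℝ => Real.log (W y / Q y)) Q0 :=
            hdiv.log (div_ne_zero hw hq)
          have harg : ContinuousAt (fun Q : Y → ℝ => W y * Real.log (W y / Q y)) Q0 :=
            continuousAt_const.mul hcomp
          have hstep : W y * Real.log (W y / Q0 y) - 1 < W y * Real.log (W y / Q0 y) :=
            sub_lt_self _ one_pos
          exact (harg.eventually (eventually_gt_nhds hstep)).mono fun Q h _ => h
        · exact Filter.Eventually.of_forall fun Q h => absurd h hcase
      filter_upwards [hev1, hev2, hev3] with Q h1 h2 h3
      show (zr : EReal) < kDiv W Q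
      unfold kDiv
      split_ifs with hcond
      · -- condition holds: real value, bound from below
        rw [show ((zr : ℝ) : EReal) < ((∑ y, if W y = 0 then 0 else
            W y * Real.log (W y / Q y) : ℝ) : EReal) ↔ zr < ∑ y, if W y = 0 then 0 else
            W y * Real.log (W y / Q y) from EReal.coe_lt_coe_iff]
        have hqys : Q ys ≠ 0 := fun h => hysW (hcond ys h)
        -- termwise bounds on the erased set
        have hbound : ∀ y ∈ Finset.univ.erase ys, m y ≤
            (if W y = 0 then 0 else W y * Real.log (W y / Q y)) := by
          intro y _
          by_cases hw : W y = 0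
          · simp [hmdef, hw]
          · have hwpos : 0 < W y := (hW.1 y).lt_of_ne (Ne.symm hw)
            by_cases hq0 : Q0 y = 0
            · -- here |Q y| < 1 (since |Q0 y| = 0) and Q y ≠ 0
              have hqy : Q y ≠ 0 := fun h => hw (hcond y h)
              have habs : |Q y| < 1 := by
                have := h2 y
                rw [hq0] at this
                simpa using this
              have hlogq : Real.log (Q y) ≤ 0 := by
                rw [← Real.log_abs]
                exact Real.log_nonpos (abs_nonneg _) habs.le
              simp only [hmdef, if_neg hw, if_pos hq0]
              rw [Real.log_div hw hqy]
              nlinarith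
            · simp only [hmdef, if_neg hw, if_neg hq0]
              exact (h3 y ⟨hw, hq0⟩).le
        have hsum_bound : M ≤ ∑ y ∈ Finset.univ.erase ys,
            (if W y = 0 then 0 else W y * Real.log (W y / Q y)) :=
          Finset.sum_le_sum hbound
        -- bound on the ys term
        have htys : zr - M < W ys * Real.log (W ys / Q ys) := by
          rw [Real.log_div hws.ne' hqys, ← Real.log_abs (Q ys)]
          have hlt : Real.log |Q ys| < L :=
            lt_of_lt_of_le (Real.log_lt_log (abs_pos.2 hqys) h1) (le_of_eq (Real.log_exp _))
          have := mul_lt_mul_of_pos_left (sub_lt_sub_left hlt (Real.log (W ys))) hws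
          have hexp : W ys * (Real.log (W ys) - L) = zr - M := by
            rw [hLdef]
            field_simp
            ring
          linarith
        have hsplit : (∑ y, if W y = 0 then 0 else W y * Real.log (W y / Q y))
            = (∑ y ∈ Finset.univ.erase ys, (if W y = 0 then 0 else W y * Real.log (W y / Q y)))
              + (if W ys = 0 then 0 else W ys * Real.log (W ys / Q ys)) :=
          (Finset.sum_erase_add _ _ (Finset.mem_univ ys)).symm
        rw [hsplit, if_neg hysW]
        linarith
      · exact EReal.coe_lt_top _

end AugustinAux6

namespace AugustinAux7
open Real Set Filter Topology AugustinAux AugustinAux2 AugustinAux3 AugustinAux4 AugustinAux5 AugustinAux6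

variable {X Y : Type*} [Fintype X] [Fintype Y]

lemma lscAt_coe_mul {c : ℝ} (hc : 0 ≤ c) {f : (Y → ℝ) → EReal} (hfb : ∀ Q, f Q ≠ ⊥)
    {Q0 : Y → ℝ} (hf : LowerSemicontinuousAt f Q0) :
    LowerSemicontinuousAt (fun Q => (c : EReal) * f Q) Q0 := by
  rcases eq_or_lt_of_le hc with rfl | hcpos
  · simp only [EReal.coe_zero, zero_mul]
    exact lowerSemicontinuousAt_const
  intro z hz
  beta_reduce at hz
  induction z with
  | bot =>
    exact Filter.Eventually.of_forall fun Q =>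
      bot_lt_iff_ne_bot.2 (coe_mul_ne_bot c hc (hfb Q))
  | top => exact absurd hz not_top_lt
  | coe zr =>
    by_cases htop : f Q0 = ⊤
    · have hm : ((((zr + 1)/c : ℝ)) : EReal) < f Q0 := by rw [htop]; exact EReal.coe_lt_top _
      refine (hf _ hm).mono fun Q hQ => ?_
      show (zr : EReal) < (c : EReal) * f Q
      have h2 := coe_mul_lt_coe_mul hcpos hQ
      have h3 : c * ((zr + 1)/c) = zr + 1 := by field_simp
      rw [h3] at h2
      exact lt_trans (by exact_mod_cast (lt_add_one zr)) h2
    · have hreal : f Q0 = (((f Q0).toReal : ℝ) : EReal) := (EReal.coe_toReal htop (hfb Q0)).symm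
      rw [hreal, ← EReal.coe_mul, gt_iff_lt, EReal.coe_lt_coe_iff] at hz
      have hm : (((zr/c : ℝ)) : EReal) < f Q0 := by
        rw [hreal, EReal.coe_lt_coe_iff]
        rw [div_lt_iff₀ hcpos]
        linarith [hz]
      refine (hf _ hm).mono fun Q hQ => ?_
      show (zr : EReal) < (c : EReal) * f Q
      have h2 := coe_mul_lt_coe_mul hcpos hQ
      have h3 : c * (zr/c) = zr := by field_simp
      rw [h3] at h2
      exact h2

lemma lscAt_sum {ι : Type*} (s : Finset ι) (g : ι → (Y → ℝ) → EReal) (Q0 : Y → ℝ)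
    (hb : ∀ i ∈ s, ∀ Q, g i Q ≠ ⊥) (h : ∀ i ∈ s, LowerSemicontinuousAt (g i) Q0) :
    LowerSemicontinuousAt (fun Q => ∑ i ∈ s, g i Q) Q0 := by
  classical
  induction s using Finset.induction_on with
  | empty => simpa using (lowerSemicontinuousAt_const : LowerSemicontinuousAt (fun _ => (0:EReal)) Q0)
  | @insert a s' hi ih =>
    have hcont : ContinuousAt (fun p : EReal × EReal => p.1 + p.2)
        (g a Q0, ∑ i ∈ s', g i Q0) :=
      EReal.continuousAt_add
        (Or.inr (sum_ne_bot _ _ fun i hi' => hb i (Finset.mem_insert_of_mem hi') Q0))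
        (Or.inl (hb a (Finset.mem_insert_self _ _) Q0))
    have hadd := (h a (Finset.mem_insert_self _ _)).add'
      (ih (fun i hi' Q => hb i (Finset.mem_insert_of_mem hi') Q)
          (fun i hi' => h i (Finset.mem_insert_of_mem hi'))) hcont
    have : (fun Q => ∑ i ∈ insert a s', g i Q) = fun Q => g a Q + ∑ i ∈ s', g i Q := by
      funext Q
      rw [Finset.sum_insert hi]
    rw [this]
    exact hadd

lemma dA_lscAt {α : ℝ} (hα : α ∈ Set.Ioc (0:ℝ) 1) {W : Y → ℝ} (hW : IsPMF W)
    {Q0 : Y → ℝ} (hQ0 : ∀ y, 0 ≤ Q0 y) :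
    LowerSemicontinuousAt (fun Q => dA α W Q) Q0 := by
  by_cases h1 : α = 1
  · have : (fun Q : Y → ℝ => dA α W Q) = fun Q => kDiv W Q := by
      funext Q; unfold dA; rw [if_pos h1]
    rw [this]
    exact kDiv_lscAt hW hQ0
  · have : (fun Q : Y → ℝ => dA α W Q) = fun Q => rDiv α W Q := by
      funext Q; unfold dA; rw [if_neg h1]
    rw [this]
    exact rDiv_lscAt (lt_of_le_of_ne hα.2 h1) W Q0

lemma cDiv_lscAt {α : ℝ} (hα : α ∈ Set.Ioc (0:ℝ) 1) {W : X → Y → ℝ} (hW : ∀ x, IsPMF (W x))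
    {P : X → ℝ} (hP : ∀ x, 0 ≤ P x) {Q0 : Y → ℝ} (hQ0 : ∀ y, 0 ≤ Q0 y) :
    LowerSemicontinuousAt (fun Q => cDiv α W Q P) Q0 := by
  have : (fun Q => cDiv α W Q P) = fun Q => ∑ x, (P x : EReal) * dA α (W x) Q := rfl
  rw [this]
  exact lscAt_sum Finset.univ (fun x Q => (P x : EReal) * dA α (W x) Q) Q0
    (fun x _ Q => coe_mul_ne_bot _ (hP x) (dA_ne_bot α (W x) Q))
    (fun x _ => lscAt_coe_mul (hP x) (fun Q => dA_ne_bot α (W x) Q) (dA_lscAt hα (hW x) hQ0))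

lemma isPMF_set_eq : {Q : Y → ℝ | IsPMF Q} = stdSimplex ℝ Y := rfl

lemma isClosed_sublevel {α : ℝ} (hα : α ∈ Set.Ioc (0:ℝ) 1) {W : X → Y → ℝ}
    (hW : ∀ x, IsPMF (W x)) {P : X → ℝ} (hP : ∀ x, 0 ≤ P x) (c : ℝ) :
    IsClosed {Q : Y → ℝ | IsPMF Q ∧ cDiv α W Q P ≤ (c : EReal)} := by
  rw [← isOpen_compl_iff, isOpen_iff_mem_nhds]
  intro Q0 hQ0
  by_cases hpmf : IsPMF Q0
  · have hlt : (c : EReal) < cDiv α W Q0 P := by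
      by_contra hle
      exact hQ0 ⟨hpmf, le_of_not_gt hle⟩
    have hev := (cDiv_lscAt hα hW hP hpmf.1) _ hlt
    refine Filter.mem_of_superset hev fun Q hQ => ?_
    intro hmem
    exact absurd hmem.2 (not_le.2 hQ)
  · have hopen : IsOpen ({Q : Y → ℝ | IsPMF Q}ᶜ) := by
      rw [isPMF_set_eq]
      exact (isClosed_stdSimplex ℝ Y).isOpen_compl
    exact Filter.mem_of_superset (hopen.mem_nhds hpmf) fun Q hQ hmem => hQ hmem.1

end AugustinAux7

namespace AugustinAux8
open Real Set Filter Topology AugustinAux AugustinAux2 AugustinAux3 AugustinAux4 AugustinAux5 AugustinAux6 AugustinAux7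

variable {X Y : Type*} [Fintype X] [Fintype Y]

lemma exists_good_Q {I : Type*} [Fintype I] [Nonempty Y] {α : ℝ} (hα : α ∈ Set.Ioc (0:ℝ) 1)
    {W : X → Y → ℝ} (hW : ∀ x, IsPMF (W x))
    {C : Set (X → ℝ)} (hCpmf : ∀ P ∈ C, IsPMF P) (hCconv : Convex ℝ C)
    (P : I → X → ℝ) (hPC : ∀ i, P i ∈ C) (s ε : ℝ) (hε : 0 < ε)
    (hs : ∀ P' ∈ C, (⨅ Q ∈ {Q : Y → ℝ | IsPMF Q}, cDiv α W Q P') ≤ (s : EReal)) :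
    ∃ Q : Y → ℝ, IsPMF Q ∧ (∀ y, 0 < Q y) ∧
      ∀ i, cDiv α W Q (P i) < ((s + ε : ℝ) : EReal) := by
  classical
  by_contra hcon
  push_neg at hcon
  have hPpos : ∀ i x, 0 ≤ P i x := fun i x => (hCpmf _ (hPC i)).1 x
  set U : Set (I → ℝ) := {v | ∃ Q : Y → ℝ, IsPMF Q ∧ (∀ y, 0 < Q y) ∧
    ∀ i, cDiv α W Q (P i) ≤ ((v i : ℝ) : EReal)} with hU
  set B : Set (I → ℝ) := Set.univ.pi (fun _ => Iio (s + ε)) with hB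
  have hBopen : IsOpen B := isOpen_set_pi Set.finite_univ (fun i _ => isOpen_Iio)
  have hBconv : Convex ℝ B := convex_pi fun i _ => convex_Iio _
  have hUconv : Convex ℝ U := by
    rintro v ⟨Qv, hQv, hQvpos, hv⟩ w ⟨Qw, hQw, hQwpos, hw⟩ a b ha hb hab
    have hmixpos : ∀ y, 0 < a * Qv y + b * Qw y := by
      intro y
      rcases eq_or_lt_of_le ha with rfl | ha'
      · have hb1 : b = 1 := by linarith
        simpa [hb1] using hQwpos y
      · have h2 := mul_nonneg hb (hQw.1 y)
        nlinarith [hQvpos y]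
    refine ⟨fun y => a * Qv y + b * Qw y, mix_pmf hQv hQw ha hb hab, hmixpos, fun i => ?_⟩
    have happly : (a • v + b • w) i = a * v i + b * w i := by
      simp [smul_eq_mul]
    rw [happly]
    calc cDiv α W (fun y => a * Qv y + b * Qw y) (P i)
        ≤ (a : EReal) * cDiv α W Qv (P i) + (b : EReal) * cDiv α W Qw (P i) :=
          cDiv_convex hα hW hQv hQw (hPpos i) ha hb hab
    _ ≤ (a : EReal) * ((v i : ℝ) : EReal) + (b : EReal) * ((w i : ℝ) : EReal) :=
          add_le_add (mul_le_mul_of_nonneg_left (hv i) (by exact_mod_cast ha))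
            (mul_le_mul_of_nonneg_left (hw i) (by exact_mod_cast hb))
    _ = ((a * v i + b * w i : ℝ) : EReal) := by
          rw [EReal.coe_add, EReal.coe_mul, EReal.coe_mul]
  have hdisj : Disjoint B U := by
    rw [Set.disjoint_left]
    rintro v hvB ⟨Q, hQ, hQpos, hv⟩
    obtain ⟨i, hi⟩ := hcon Q hQ hQpos
    have h3 : v i < s + ε := hvB i (Set.mem_univ i)
    have h4 : ((s + ε : ℝ) : EReal) ≤ ((v i : ℝ) : EReal) := le_trans hi (hv i)
    rw [EReal.coe_le_coe_iff] at h4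
    linarith
  obtain ⟨f, u, hfB, hfU⟩ := geometric_hahn_banach_open hBconv hBopen hUconv hdisj
  set lam : I → ℝ := fun i => f (Pi.single i 1) with hlam
  have hrepr : ∀ v : I → ℝ, f v = ∑ i, v i * lam i := by
    intro v
    have hv : v = ∑ i, v i • (Pi.single i 1 : I → ℝ) := by
      funext j
      rw [Finset.sum_apply]
      simp [Pi.single_apply, mul_ite, Finset.sum_ite_eq]
    conv_lhs => rw [hv]
    rw [map_sum]
    refine Finset.sum_congr rfl fun i _ => ?_
    rw [map_smul, smul_eq_mul]
  have hQu : IsPMF (unif Y) := unif_pmf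
  set v0 : I → ℝ := fun i => (cDiv α W (unif Y) (P i)).toReal with hv0
  have hv0U : v0 ∈ U :=
    ⟨unif Y, hQu, unif_pos, fun i =>
      EReal.le_coe_toReal (cDiv_ne_top_of_pos hα hW unif_pos (hPpos i))⟩
  have hlam_nonneg : ∀ i, 0 ≤ lam i := by
    intro i
    by_contra hneg
    push_neg at hneg
    have hl : lam i ≠ 0 := ne_of_lt hneg
    have hfv0 : u ≤ f v0 := hfU _ hv0U
    obtain ⟨t, ht⟩ : ∃ t : ℝ, t = (f v0 - u)/(-lam i) + 1 := ⟨_, rfl⟩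
    have ht0 : 0 ≤ t := by
      have h1 : 0 ≤ (f v0 - u)/(-lam i) := div_nonneg (by linarith) (by linarith)
      linarith
    have hmem : (fun j => v0 j + (if j = i then t else 0)) ∈ U := by
      obtain ⟨Q, hQ, hQpos, hv⟩ := hv0U
      refine ⟨Q, hQ, hQpos, fun j => le_trans (hv j) ?_⟩
      rw [EReal.coe_le_coe_iff]
      show v0 j ≤ v0 j + if j = i then t else 0
      split_ifs <;> linarith
    have hle := hfU _ hmem
    rw [hrepr] at hle
    have hsum : ∑ j, (v0 j + (if j = i then t else 0)) * lam j
        = (∑ j, v0 j * lam j) + t * lam i := by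
      simp only [add_mul, ite_mul, zero_mul]
      rw [Finset.sum_add_distrib]
      congr 1
      rw [Finset.sum_ite_eq' Finset.univ i (fun j => t * lam j)]
      simp
    rw [hsum, ← hrepr] at hle
    have hfrac : (f v0 - u)/(-lam i) * lam i = -(f v0 - u) := by
      rw [div_mul_eq_mul_div, mul_div_assoc, div_neg, div_self hl]
      ring
    have hti : t * lam i = -(f v0 - u) + lam i := by
      rw [ht, add_mul, one_mul, hfrac]
    rw [hti] at hle
    linarith
  have hT : 0 < ∑ i, lam i := by
    rcases (Finset.sum_nonneg (fun i _ => hlam_nonneg i)).lt_or_eq with h | h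
    · exact h
    · exfalso
      have hall : ∀ i ∈ Finset.univ, lam i = 0 :=
        (Finset.sum_eq_zero_iff_of_nonneg (fun i _ => hlam_nonneg i)).1 h.symm
      have hf0 : ∀ v : I → ℝ, f v = 0 := fun v => by
        rw [hrepr v]
        exact Finset.sum_eq_zero fun i _ => by rw [hall i (Finset.mem_univ i), mul_zero]
      have h1 : f (fun _ => s + ε - 1) < u :=
        hfB _ (Set.mem_univ_pi.2 fun i => by
          show s + ε - 1 ∈ Iio (s + ε)
          simp only [Set.mem_Iio]; linarith)
      have h2 : u ≤ f v0 := hfU _ hv0U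
      rw [hf0] at h1
      rw [hf0] at h2
      linarith
  have hkey : ∀ v ∈ U, (∑ i, lam i) * (s + ε) ≤ f v := by
    intro v hvU
    by_contra hclt
    push_neg at hclt
    obtain ⟨δ, hδ⟩ : ∃ δ : ℝ, δ = ((∑ i, lam i) * (s + ε) - f v)/(2*(∑ i, lam i)) := ⟨_, rfl⟩
    have hδ0 : 0 < δ := by
      rw [hδ]
      exact div_pos (by linarith) (by linarith)
    have h1 : f (fun _ => s + ε - δ) < u :=
      hfB _ (Set.mem_univ_pi.2 fun i => by
        show s + ε - δ ∈ Iio (s + ε)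
        simp only [Set.mem_Iio]; linarith)
    have h2 : u ≤ f v := hfU _ hvU
    have h3 : f (fun _ => s + ε - δ) = (s + ε - δ) * ∑ i, lam i := by
      rw [hrepr, ← Finset.mul_sum]
    have hδT : δ * (∑ i, lam i) = ((∑ i, lam i) * (s + ε) - f v)/2 := by
      rw [hδ]
      field_simp
    nlinarith
  set lam' : I → ℝ := fun i => lam i / (∑ j, lam j) with hlam'
  have hlam'_nonneg : ∀ i, 0 ≤ lam' i := fun i => div_nonneg (hlam_nonneg i) hT.le
  have hlam'_sum : ∑ i, lam' i = 1 := by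
    simp only [hlam']
    rw [← Finset.sum_div, div_self hT.ne']
  set Pmix : X → ℝ := fun x => ∑ i, lam' i * P i x with hPmix
  have hPmixC : Pmix ∈ C := by
    have hmem := hCconv.sum_mem (t := Finset.univ) (fun i _ => hlam'_nonneg i) hlam'_sum
      (fun i _ => hPC i)
    have heq : (∑ i, lam' i • P i) = Pmix := by
      funext x
      rw [Finset.sum_apply, hPmix]
      simp [smul_eq_mul]
    rw [← heq]
    exact hmem
  have hclaim : ∀ Q : Y → ℝ, IsPMF Q → (∀ y, 0 < Q y) →
      ((s + ε : ℝ) : EReal) ≤ cDiv α W Q Pmix := by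
    intro Q hQ hQpos
    set v : I → ℝ := fun i => (cDiv α W Q (P i)).toReal with hv
    have hvfin : ∀ i, cDiv α W Q (P i) = ((v i : ℝ) : EReal) := fun i =>
      (EReal.coe_toReal (cDiv_ne_top_of_pos hα hW hQpos (hPpos i))
        (cDiv_ne_bot α W Q (hPpos i))).symm
    have hvU : v ∈ U := ⟨Q, hQ, hQpos, fun i => le_of_eq (hvfin i)⟩
    have h1 := hkey v hvU
    rw [hrepr v] at h1
    have h2 : cDiv α W Q Pmix = ((∑ i, lam' i * v i : ℝ) : EReal) := by
      rw [hPmix, cDiv_affine hα hW hQ lam' hlam'_nonneg P (fun i x => hPpos i x), coe_sum]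
      refine Finset.sum_congr rfl fun i _ => ?_
      rw [hvfin i, ← EReal.coe_mul]
    rw [h2, EReal.coe_le_coe_iff]
    have h3 : ∑ i, lam' i * v i = (∑ i, v i * lam i)/(∑ j, lam j) := by
      rw [Finset.sum_div]
      refine Finset.sum_congr rfl fun i _ => ?_
      simp only [hlam']
      ring
    rw [h3, le_div_iff₀ hT]
    linarith
  have hfinal := le_cDiv_of_le_on_pos hα hW (fun x => (hCpmf _ hPmixC).1 x) hclaim
  have hinf : ((s + ε : ℝ) : EReal) ≤ ⨅ Q ∈ {Q : Y → ℝ | IsPMF Q}, cDiv α W Q Pmix :=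
    le_iInf₂ fun Q hQ => hfinal Q hQ
  have hcontr := le_trans hinf (hs Pmix hPmixC)
  rw [EReal.coe_le_coe_iff] at hcontr
  linarith

end AugustinAux8

open AugustinAux AugustinAux2 AugustinAux3 AugustinAux4 AugustinAux5 AugustinAux6 AugustinAux7 AugustinAux8 in
/-- minimax equality for the Augustin capacity over a convex constraint set. -/
theorem augustin_minimax {X Y : Type*} [Fintype X] [Fintype Y]
    [Nonempty X] [Nonempty Y]
    (α : ℝ) (hα : α ∈ Set.Ioc (0 : ℝ) 1)
    (W : X → Y → ℝ) (hW : ∀ x, IsPMF (W x))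
    (C : Set (X → ℝ)) (hCne : C.Nonempty) (hCpmf : ∀ P ∈ C, IsPMF P)
    (hCconv : Convex ℝ C) :
    (⨆ P ∈ C, ⨅ Q ∈ {Q : Y → ℝ | IsPMF Q}, cDiv α W Q P) =
      ⨅ Q ∈ {Q : Y → ℝ | IsPMF Q}, ⨆ P ∈ C, cDiv α W Q P := by
  classical
  have easy : (⨆ P ∈ C, ⨅ Q ∈ {Q : Y → ℝ | IsPMF Q}, cDiv α W Q P) ≤
      ⨅ Q ∈ {Q : Y → ℝ | IsPMF Q}, ⨆ P ∈ C, cDiv α W Q P := by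
    refine iSup₂_le fun P hP => le_iInf₂ fun Q hQ => ?_
    exact le_trans (iInf₂_le Q hQ) (le_iSup₂_of_le P hP le_rfl)
  refine le_antisymm easy ?_
  set L := (⨆ P ∈ C, ⨅ Q ∈ {Q : Y → ℝ | IsPMF Q}, cDiv α W Q P) with hL
  by_cases hLtop : L = ⊤
  · rw [hLtop]; exact le_top
  obtain ⟨P0, hP0⟩ := hCne
  have hL0 : 0 ≤ L := by
    have h1 : (0 : EReal) ≤ ⨅ Q ∈ {Q : Y → ℝ | IsPMF Q}, cDiv α W Q P0 :=
      le_iInf₂ fun Q hQ => cDiv_nonneg hα hW hQ ((hCpmf P0 hP0).1)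
    refine le_trans h1 ?_
    rw [hL]
    exact le_iSup₂ (f := fun P (_ : P ∈ C) =>
      ⨅ Q ∈ {Q : Y → ℝ | IsPMF Q}, cDiv α W Q P) P0 hP0
  have hLbot : L ≠ ⊥ := by
    intro h
    rw [h] at hL0
    exact absurd hL0 (by simp)
  set s := L.toReal with hsdef
  have hLs : L = (s : EReal) := (EReal.coe_toReal hLtop hLbot).symm
  set ι := {pe : (X → ℝ) × ℝ // pe.1 ∈ C ∧ 0 < pe.2} with hι
  set ts : ι → Set (Y → ℝ) := fun pe =>
    {Q | IsPMF Q ∧ cDiv α W Q pe.1.1 ≤ ((s + pe.1.2 : ℝ) : EReal)} with hts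
  have hclosed : ∀ pe : ι, IsClosed (ts pe) := fun pe =>
    isClosed_sublevel hα hW ((hCpmf _ pe.2.1).1) _
  have hKcompact : IsCompact {Q : Y → ℝ | IsPMF Q} := by
    rw [isPMF_set_eq]
    exact isCompact_stdSimplex ℝ Y
  have hhs : ∀ P' ∈ C, (⨅ Q ∈ {Q : Y → ℝ | IsPMF Q}, cDiv α W Q P') ≤ (s : EReal) := by
    intro P' hP'
    rw [← hLs, hL]
    exact le_iSup₂ (f := fun P (_ : P ∈ C) =>
      ⨅ Q ∈ {Q : Y → ℝ | IsPMF Q}, cDiv α W Q P) P' hP'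
  have hfin : ∀ u : Finset ι, ({Q : Y → ℝ | IsPMF Q} ∩ ⋂ i ∈ u, ts i).Nonempty := by
    intro u
    rcases u.eq_empty_or_nonempty with rfl | hu
    · refine ⟨unif Y, unif_pmf, ?_⟩
      simp
    · set ε := u.inf' hu (fun i => i.1.2) with hε
      have hεpos : 0 < ε := by
        rw [hε, Finset.lt_inf'_iff]
        exact fun i hi => i.2.2
      obtain ⟨Q, hQpmf, hQpos, hQlt⟩ := exists_good_Q (I := {i : ι // i ∈ u}) hα hW hCpmf
        hCconv (fun i => i.1.1.1) (fun i => i.1.2.1) s ε hεpos hhs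
      refine ⟨Q, hQpmf, ?_⟩
      rw [Set.mem_iInter₂]
      intro i hi
      refine ⟨hQpmf, ?_⟩
      refine le_trans (hQlt ⟨i, hi⟩).le ?_
      rw [EReal.coe_le_coe_iff]
      have hle : ε ≤ i.1.2 := by
        rw [hε]
        exact Finset.inf'_le _ hi
      linarith
  have hinter : ({Q : Y → ℝ | IsPMF Q} ∩ ⋂ i : ι, ts i).Nonempty := by
    by_contra hempty
    rw [Set.not_nonempty_iff_eq_empty] at hempty
    obtain ⟨u, hu⟩ := hKcompact.elim_finite_subfamily_closed ts hclosed hempty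
    exact absurd hu (Set.nonempty_iff_ne_empty.1 (hfin u))
  obtain ⟨Qstar, hQstarK, hQstarI⟩ := hinter
  rw [Set.mem_iInter] at hQstarI
  have hQstar : ∀ P ∈ C, cDiv α W Qstar P ≤ (s : EReal) := by
    intro P hP
    by_contra hgt
    push_neg at hgt
    by_cases htop : cDiv α W Qstar P = ⊤
    · have hmem := (hQstarI ⟨(P, 1), hP, one_pos⟩).2
      rw [htop] at hmem
      exact absurd (lt_of_le_of_lt hmem (EReal.coe_lt_top _)) (lt_irrefl _)
    · have hbot := cDiv_ne_bot α W Qstar ((hCpmf P hP).1)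
      set r := (cDiv α W Qstar P).toReal with hrdef
      have hr : cDiv α W Qstar P = (r : EReal) := (EReal.coe_toReal htop hbot).symm
      rw [hr, EReal.coe_lt_coe_iff] at hgt
      have hhalf : 0 < (r - s)/2 := by linarith
      have hmem := (hQstarI ⟨(P, (r - s)/2), hP, hhalf⟩).2
      rw [hr, EReal.coe_le_coe_iff] at hmem
      simp only at hmem
      linarith
  calc (⨅ Q ∈ {Q : Y → ℝ | IsPMF Q}, ⨆ P ∈ C, cDiv α W Q P)
      ≤ ⨆ P ∈ C, cDiv α W Qstar P := iInf₂_le Qstar hQstarK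
  _ ≤ (s : EReal) := iSup₂_le fun P hP => hQstar P hP
  _ = L := hLs.symm
end

section
/- Let W : X → P(Y) with X, Y finite, ρ : X → ℝ≥0^ℓ, α ∈ (0,1], λ ∈ ℝ≥0^ℓ. Define the A-L radius R_α^λ(W) := inf_Q sup_{x ∈ X} [ D_α(W(x)‖Q) − λ·ρ(x) ], where Q ranges over probability mass functions on Y. Then the A-L capacity C_α^λ(W) := sup_P [ I_α(P;W) − λ·Σ_x P(x)ρ(x) ] satisfies C_α^λ(W) = R_α^λ(W). -/
open scoped BigOperators

/-- Augustin–Legendre capacity `C_α^λ(W) = sup_P [I_α(P;W) − λ·E_P[ρ]]`. -/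
noncomputable def alCap {X Y : Type*} [Fintype X] [Fintype Y] {l : ℕ}
    (α : ℝ) (W : X → Y → ℝ) (ρ : X → Fin l → ℝ) (lam : Fin l → ℝ) : EReal :=
  ⨆ P ∈ {P : X → ℝ | IsPMF P},
    (aInfo α P W - (((∑ i, lam i * ∑ x, P x * ρ x i) : ℝ) : EReal))


open Set Filter Topology

namespace ALAux


variable {Y : Type*} [Fintype Y]

noncomputable def kB (W : Y → ℝ) : ℝ := ∑ y, if W y = 0 then 0 else W y * Real.log (W y)

noncomputable def kProd (W Q : Y → ℝ) : ℝ := ∏ y, if W y = 0 then 1 else Q y ^ (W y)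

noncomputable def Fq (α : ℝ) (W Q : Y → ℝ) : ℝ := if α = 1 then kProd W Q else rSum α W Q

noncomputable def gz (α : ℝ) (W : Y → ℝ) (z : ℝ) : ℝ :=
  if α = 1 then Real.exp (kB W - z) else Real.exp ((α - 1) * z)

lemma dA_ne_bot (α : ℝ) (W Q : Y → ℝ) : dA α W Q ≠ ⊥ := by
  unfold dA kDiv rDiv
  split_ifs <;> simp [← EReal.coe_mul]

lemma rSum_nonneg {α : ℝ} {W Q : Y → ℝ} (hW : ∀ y, 0 ≤ W y) (hQ : ∀ y, 0 ≤ Q y) :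
    0 ≤ rSum α W Q :=
  Finset.sum_nonneg fun y _ => mul_nonneg (Real.rpow_nonneg (hW y) _) (Real.rpow_nonneg (hQ y) _)

/-- The key characterization of the sublevel sets of `dA` by continuous functions. -/
lemma dA_le_iff {α : ℝ} (hα : α ∈ Set.Ioc (0:ℝ) 1) {W Q : Y → ℝ}
    (hW : ∀ y, 0 ≤ W y) (hQ : ∀ y, 0 ≤ Q y) (z : ℝ) :
    dA α W Q ≤ (z : EReal) ↔ gz α W z ≤ Fq α W Q := by
  by_cases h1 : α = 1
  · subst h1
    simp only [dA, Fq, gz, kDiv, eq_self_iff_true, if_true]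
    by_cases hac : ∀ y, Q y = 0 → W y = 0
    · rw [if_pos hac]
      have hpos : ∀ y, W y ≠ 0 → 0 < Q y := by
        intro y hy
        rcases (hQ y).lt_or_eq with h | h
        · exact h
        · exact absurd (hac y h.symm) hy
      have hkp : 0 < kProd W Q := by
        apply Finset.prod_pos
        intro y _
        by_cases hy : W y = 0
        · simp [hy]
        · simp only [if_neg hy]
          exact Real.rpow_pos_of_pos (hpos y hy) _
      have hlog : Real.log (kProd W Q) = ∑ y, if W y = 0 then 0 else W y * Real.log (Q y) := by
        unfold kProd
        rw [Real.log_prod]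
        · refine Finset.sum_congr rfl fun y _ => ?_
          by_cases hy : W y = 0
          · simp [hy]
          · simp only [if_neg hy]
            exact Real.log_rpow (hpos y hy) _
        · intro y _
          by_cases hy : W y = 0
          · simp [hy]
          · simp only [if_neg hy]
            exact ne_of_gt (Real.rpow_pos_of_pos (hpos y hy) _)
      have hsum : (∑ y, if W y = 0 then 0 else W y * Real.log (W y / Q y))
          = kB W - Real.log (kProd W Q) := by
        rw [hlog, kB, ← Finset.sum_sub_distrib]
        refine Finset.sum_congr rfl fun y _ => ?_
        by_cases hy : W y = 0
        · simp [hy]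
        · simp only [if_neg hy]
          rw [Real.log_div hy (ne_of_gt (hpos y hy))]
          ring
      rw [EReal.coe_le_coe_iff, hsum]
      rw [sub_le_iff_le_add, ← sub_le_iff_le_add']
      exact Real.le_log_iff_exp_le hkp
    · rw [if_neg hac]
      push_neg at hac
      obtain ⟨y0, hQ0, hW0⟩ := hac
      have hkp : kProd W Q = 0 := by
        apply Finset.prod_eq_zero (Finset.mem_univ y0)
        rw [if_neg hW0, hQ0, Real.zero_rpow hW0]
      simp only [top_le_iff, EReal.coe_ne_top, false_iff, not_le, hkp]
      exact Real.exp_pos _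
  · simp only [dA, if_neg h1, Fq, gz, if_neg h1, rDiv]
    have hαlt : α < 1 := lt_of_le_of_ne hα.2 h1
    have hne : α - 1 < 0 := by linarith
    by_cases h0 : rSum α W Q = 0
    · rw [if_pos h0, h0]
      simp only [top_le_iff, EReal.coe_ne_top, false_iff, not_le]
      exact Real.exp_pos _
    · rw [if_neg h0, EReal.coe_le_coe_iff]
      have hS : 0 < rSum α W Q := lt_of_le_of_ne (rSum_nonneg hW hQ) (Ne.symm h0)
      rw [one_div, ← div_eq_inv_mul, div_le_iff_of_neg hne]
      rw [Real.le_log_iff_exp_le hS, mul_comm]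


lemma continuous_rpow_const {c : ℝ} (hc : 0 < c) : Continuous fun t : ℝ => t ^ c := by
  rw [continuous_iff_continuousAt]
  intro t
  exact Real.continuousAt_rpow_const t c (Or.inr hc.le)

lemma continuous_Fq {α : ℝ} (hα : α ∈ Set.Ioc (0:ℝ) 1) {W : Y → ℝ} (hW : ∀ y, 0 ≤ W y) :
    Continuous (Fq α W) := by
  by_cases h1 : α = 1
  · have he : Fq α W = fun Q : Y → ℝ => ∏ y, if W y = 0 then 1 else Q y ^ (W y) := by
      funext Q; simp only [Fq, if_pos h1, kProd]
    rw [he]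
    apply continuous_finset_prod
    intro y _
    by_cases hy : W y = 0
    · simp only [if_pos hy]; exact continuous_const
    · simp only [if_neg hy]
      exact (continuous_rpow_const (lt_of_le_of_ne (hW y) (Ne.symm hy))).comp (continuous_apply y)
  · have he : Fq α W = fun Q : Y → ℝ => ∑ y, W y ^ α * Q y ^ (1 - α) := by
      funext Q; simp only [Fq, if_neg h1, rSum]
    rw [he]
    apply continuous_finset_sum
    intro y _
    exact continuous_const.mul
      ((continuous_rpow_const (by have := lt_of_le_of_ne hα.2 h1; linarith)).comp
        (continuous_apply y))

lemma continuous_gz {α : ℝ} (W : Y → ℝ) : Continuous (gz α W) := by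
  unfold gz
  split_ifs
  · exact Real.continuous_exp.comp (continuous_const.sub continuous_id)
  · exact Real.continuous_exp.comp (continuous_const.mul continuous_id)

lemma gz_antitone {α : ℝ} (hα : α ∈ Set.Ioc (0:ℝ) 1) (W : Y → ℝ) : Antitone (gz α W) := by
  unfold gz
  split_ifs with h1
  · intro a b hab
    exact Real.exp_le_exp.2 (by linarith)
  · intro a b hab
    have : α - 1 < 0 := by
      rcases lt_of_le_of_ne hα.2 h1 with h; linarith
    exact Real.exp_le_exp.2 (by nlinarith)

lemma gz_pos {α : ℝ} (W : Y → ℝ) (z : ℝ) : 0 < gz α W z := by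
  unfold gz; split_ifs <;> exact Real.exp_pos _

/-- `dA` is finite at any everywhere-positive `Q`. -/
lemma dA_ne_top_of_pos {α : ℝ} (hα : α ∈ Set.Ioc (0:ℝ) 1) {W Q : Y → ℝ}
    (hW : IsPMF W) (hQ : ∀ y, 0 < Q y) : dA α W Q ≠ ⊤ := by
  obtain ⟨y0, hy0⟩ : ∃ y, W y ≠ 0 := by
    by_contra h
    push_neg at h
    have : (∑ y, W y) = 0 := Finset.sum_eq_zero fun y _ => h y
    rw [hW.2] at this; norm_num at this
  by_cases h1 : α = 1
  · subst h1
    simp only [dA, eq_self_iff_true, if_true, kDiv]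
    rw [if_pos fun y hy => absurd hy (ne_of_gt (hQ y))]
    exact EReal.coe_ne_top _
  · simp only [dA, if_neg h1, rDiv]
    have hS : 0 < rSum α W Q := by
      apply Finset.sum_pos'
      · intro y _
        exact mul_nonneg (Real.rpow_nonneg (hW.1 y) _) (Real.rpow_nonneg (hQ y).le _)
      · refine ⟨y0, Finset.mem_univ _, ?_⟩
        exact mul_pos (Real.rpow_pos_of_pos (lt_of_le_of_ne (hW.1 y0) (Ne.symm hy0)) _)
          (Real.rpow_pos_of_pos (hQ y0) _)
    rw [if_neg (ne_of_gt hS)]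
    exact EReal.coe_ne_top _

/-- Multiplicative concavity of `Fq` along mixtures. -/
lemma Fq_mix_ge {α : ℝ} (hα : α ∈ Set.Ioc (0:ℝ) 1) {W Q₁ Q₂ : Y → ℝ}
    (hW : ∀ y, 0 ≤ W y) (hQ₁ : ∀ y, 0 ≤ Q₁ y) (hQ₂ : ∀ y, 0 ≤ Q₂ y)
    {a b : ℝ} (ha : 0 ≤ a) (hb : 0 ≤ b) (hab : a + b = 1) :
    Fq α W Q₁ ^ a * Fq α W Q₂ ^ b ≤ Fq α W (fun y => a * Q₁ y + b * Q₂ y) := by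
  by_cases h1 : α = 1
  · subst h1
    simp only [Fq, eq_self_iff_true, if_true, kProd]
    have hf₁ : ∀ y ∈ Finset.univ, (0:ℝ) ≤ (if W y = 0 then 1 else Q₁ y ^ (W y)) := by
      intro y _; split_ifs
      · norm_num
      · exact Real.rpow_nonneg (hQ₁ y) _
    have hf₂ : ∀ y ∈ Finset.univ, (0:ℝ) ≤ (if W y = 0 then 1 else Q₂ y ^ (W y)) := by
      intro y _; split_ifs
      · norm_num
      · exact Real.rpow_nonneg (hQ₂ y) _
    rw [← Real.finset_prod_rpow _ _ hf₁ a, ← Real.finset_prod_rpow _ _ hf₂ b,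
        ← Finset.prod_mul_distrib]
    apply Finset.prod_le_prod
    · intro y hy
      exact mul_nonneg (Real.rpow_nonneg (hf₁ y hy) a) (Real.rpow_nonneg (hf₂ y hy) b)
    · intro y _
      by_cases hy : W y = 0
      · simp [hy]
      · simp only [if_neg hy]
        have h₁ : (Q₁ y ^ W y) ^ a = (Q₁ y ^ a) ^ W y := by
          rw [← Real.rpow_mul (hQ₁ y), ← Real.rpow_mul (hQ₁ y), mul_comm]
        have h₂ : (Q₂ y ^ W y) ^ b = (Q₂ y ^ b) ^ W y := by
          rw [← Real.rpow_mul (hQ₂ y), ← Real.rpow_mul (hQ₂ y), mul_comm]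
        rw [h₁, h₂, ← Real.mul_rpow (Real.rpow_nonneg (hQ₁ y) a) (Real.rpow_nonneg (hQ₂ y) b)]
        exact Real.rpow_le_rpow
          (mul_nonneg (Real.rpow_nonneg (hQ₁ y) a) (Real.rpow_nonneg (hQ₂ y) b))
          (Real.geom_mean_le_arith_mean2_weighted ha hb (hQ₁ y) (hQ₂ y) hab) (hW y)
  · simp only [Fq, if_neg h1]
    have hp0 : (0:ℝ) ≤ 1 - α := by have := hα.2; linarith
    have hp1 : 1 - α ≤ 1 := by have := hα.1; linarith
    have hstep : a * rSum α W Q₁ + b * rSum α W Q₂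
        ≤ rSum α W (fun y => a * Q₁ y + b * Q₂ y) := by
      simp only [rSum, Finset.mul_sum, ← Finset.sum_add_distrib]
      apply Finset.sum_le_sum
      intro y _
      have hcc := (Real.concaveOn_rpow hp0 hp1).2 (Set.mem_Ici.2 (hQ₁ y))
        (Set.mem_Ici.2 (hQ₂ y)) ha hb hab
      simp only [smul_eq_mul] at hcc
      calc a * (W y ^ α * Q₁ y ^ (1-α)) + b * (W y ^ α * Q₂ y ^ (1-α))
          = W y ^ α * (a * Q₁ y ^ (1-α) + b * Q₂ y ^ (1-α)) := by ring
        _ ≤ W y ^ α * ((a * Q₁ y + b * Q₂ y) ^ (1-α)) := by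
            exact mul_le_mul_of_nonneg_left hcc (Real.rpow_nonneg (hW y) _)
    calc rSum α W Q₁ ^ a * rSum α W Q₂ ^ b
        ≤ a * rSum α W Q₁ + b * rSum α W Q₂ :=
          Real.geom_mean_le_arith_mean2_weighted ha hb (rSum_nonneg hW hQ₁)
            (rSum_nonneg hW hQ₂) hab
      _ ≤ _ := hstep

lemma gz_affine {α : ℝ} (W : Y → ℝ) {a b : ℝ} (hab : a + b = 1) (d₁ d₂ : ℝ) :
    gz α W (a * d₁ + b * d₂) = gz α W d₁ ^ a * gz α W d₂ ^ b := by
  have hexp : ∀ s t : ℝ, Real.exp s ^ t = Real.exp (t * s) := by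
    intro s t
    rw [← Real.exp_log (Real.rpow_pos_of_pos (Real.exp_pos s) t), Real.log_rpow (Real.exp_pos s),
      Real.log_exp]
  unfold gz
  split_ifs
  · rw [hexp, hexp, ← Real.exp_add]
    congr 1
    linear_combination (-(kB W)) * hab
  · rw [hexp, hexp, ← Real.exp_add]
    congr 1
    ring

/-- Convexity inequality for `dA` along mixtures, in terms of real upper bounds. -/
lemma dA_mix_le {α : ℝ} (hα : α ∈ Set.Ioc (0:ℝ) 1) {W Q₁ Q₂ : Y → ℝ}
    (hW : IsPMF W) (hQ₁ : ∀ y, 0 ≤ Q₁ y) (hQ₂ : ∀ y, 0 ≤ Q₂ y)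
    {a b : ℝ} (ha : 0 ≤ a) (hb : 0 ≤ b) (hab : a + b = 1)
    {d₁ d₂ : ℝ} (h₁ : dA α W Q₁ ≤ (d₁ : EReal)) (h₂ : dA α W Q₂ ≤ (d₂ : EReal)) :
    dA α W (fun y => a * Q₁ y + b * Q₂ y) ≤ ((a * d₁ + b * d₂ : ℝ) : EReal) := by
  have hQm : ∀ y, 0 ≤ a * Q₁ y + b * Q₂ y :=
    fun y => add_nonneg (mul_nonneg ha (hQ₁ y)) (mul_nonneg hb (hQ₂ y))
  rw [dA_le_iff hα hW.1 hQm]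
  rw [dA_le_iff hα hW.1 hQ₁] at h₁
  rw [dA_le_iff hα hW.1 hQ₂] at h₂
  calc gz α W (a * d₁ + b * d₂) = gz α W d₁ ^ a * gz α W d₂ ^ b := gz_affine W hab d₁ d₂
    _ ≤ Fq α W Q₁ ^ a * Fq α W Q₂ ^ b := by
        apply mul_le_mul
        · exact Real.rpow_le_rpow (gz_pos W d₁).le h₁ ha
        · exact Real.rpow_le_rpow (gz_pos W d₂).le h₂ hb
        · exact Real.rpow_nonneg (gz_pos W d₂).le b
        · exact Real.rpow_nonneg (le_trans (gz_pos W d₁).le h₁) a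
    _ ≤ _ := Fq_mix_ge hα hW.1 hQ₁ hQ₂ ha hb hab


lemma ereal_sub_le_iff {a : EReal} {c z : ℝ} :
    a - (c : EReal) ≤ (z : EReal) ↔ a ≤ ((z + c : ℝ) : EReal) := by
  rw [EReal.sub_le_iff_le_add (Or.inl (EReal.coe_ne_bot c)) (Or.inl (EReal.coe_ne_top c)),
    EReal.coe_add]

lemma coe_mul_ne_bot {p : ℝ} (hp : 0 ≤ p) {a : EReal} (ha : a ≠ ⊥) : (p : EReal) * a ≠ ⊥ := by
  induction a with
  | bot => exact absurd rfl ha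
  | coe r => rw [← EReal.coe_mul]; exact EReal.coe_ne_bot _
  | top =>
    rcases hp.lt_or_eq with h | h
    · rw [EReal.coe_mul_top_of_pos h]; simp
    · rw [← h]; simp

lemma ereal_mul_sub (p c : ℝ) (hp : 0 ≤ p) (a : EReal) (ha : a ≠ ⊥) :
    (p : EReal) * (a - (c : EReal)) = (p : EReal) * a - ((p * c : ℝ) : EReal) := by
  induction a with
  | bot => exact absurd rfl ha
  | coe r =>
    rw [← EReal.coe_sub, ← EReal.coe_mul, ← EReal.coe_mul, ← EReal.coe_sub]
    norm_cast; ring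
  | top =>
    rw [EReal.top_sub_coe]
    rcases hp.lt_or_eq with h | h
    · rw [EReal.coe_mul_top_of_pos h, EReal.top_sub_coe]
    · rw [← h]; simp

lemma ereal_sum_ne_bot {ι : Type*} (s : Finset ι) (f : ι → EReal) (h : ∀ i ∈ s, f i ≠ ⊥) :
    ∑ i ∈ s, f i ≠ ⊥ := by
  classical
  induction s using Finset.induction with
  | empty => simp
  | insert a s' hni ih =>
    rw [Finset.sum_insert hni]
    rw [Ne, EReal.add_eq_bot_iff]
    push_neg
    exact ⟨h a (Finset.mem_insert_self a s'), ih fun i hi => h i (Finset.mem_insert_of_mem hi)⟩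

lemma ereal_sum_eq_top {ι : Type*} (s : Finset ι) (f : ι → EReal) (h : ∀ i ∈ s, f i ≠ ⊥)
    {i₀ : ι} (hi₀ : i₀ ∈ s) (htop : f i₀ = ⊤) : ∑ i ∈ s, f i = ⊤ := by
  classical
  rw [← Finset.add_sum_erase s f hi₀, htop]
  exact EReal.top_add_of_ne_bot
    (ereal_sum_ne_bot _ _ fun i hi => h i (Finset.mem_of_mem_erase hi))

lemma ereal_coe_sum {ι : Type*} (s : Finset ι) (f : ι → ℝ) :
    ((∑ i ∈ s, f i : ℝ) : EReal) = ∑ i ∈ s, (f i : EReal) :=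
  map_sum (⟨⟨Real.toEReal, EReal.coe_zero⟩, EReal.coe_add⟩ : ℝ →+ EReal) f s

lemma iInf2_sub_const {β : Type*} (S : Set β) (h : β → EReal) (c : ℝ) :
    (⨅ Q ∈ S, h Q) - (c : EReal) = ⨅ Q ∈ S, (h Q - (c : EReal)) := by
  apply le_antisymm
  · exact le_iInf₂ fun Q hQ => EReal.sub_le_sub (iInf₂_le Q hQ) le_rfl
  · rw [EReal.le_sub_iff_add_le (Or.inl (EReal.coe_ne_bot c)) (Or.inl (EReal.coe_ne_top c))]
    apply le_iInf₂
    intro Q hQ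
    calc (⨅ Q ∈ S, (h Q - (c : EReal))) + (c : EReal)
        ≤ (h Q - (c : EReal)) + (c : EReal) := add_le_add_left (iInf₂_le Q hQ) _
      _ = h Q := EReal.sub_add_cancel


lemma ereal_sub_coe_ne_bot {a : EReal} (ha : a ≠ ⊥) (c : ℝ) : a - (c : EReal) ≠ ⊥ := by
  induction a with
  | bot => exact absurd rfl ha
  | coe r => rw [← EReal.coe_sub]; exact EReal.coe_ne_bot _
  | top => rw [EReal.top_sub_coe]; simp

lemma ereal_sub_coe_ne_top {a : EReal} (ha : a ≠ ⊤) (c : ℝ) : a - (c : EReal) ≠ ⊤ := by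
  induction a with
  | bot => simp
  | coe r => rw [← EReal.coe_sub]; exact EReal.coe_ne_top _
  | top => exact absurd rfl ha

theorem minimax {X Y : Type*} [Fintype X] [Fintype Y] [Nonempty X] [Nonempty Y]
    {α : ℝ} (hα : α ∈ Set.Ioc (0:ℝ) 1) (W : X → Y → ℝ) (hW : ∀ x, IsPMF (W x)) (c : X → ℝ) :
    (⨆ P ∈ {P : X → ℝ | IsPMF P}, ⨅ Q ∈ {Q : Y → ℝ | IsPMF Q},
        ∑ x, (P x : EReal) * (dA α (W x) Q - (c x : EReal)))
      = ⨅ Q ∈ {Q : Y → ℝ | IsPMF Q}, ⨆ x, (dA α (W x) Q - (c x : EReal)) := by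
  classical
  set SA : Set (X → ℝ) := {P : X → ℝ | IsPMF P} with hSA
  set SB : Set (Y → ℝ) := {Q : Y → ℝ | IsPMF Q} with hSBdef
  set φ : X → (Y → ℝ) → EReal := fun x Q => dA α (W x) Q - (c x : EReal) with hφdef
  set G : (X → ℝ) → (Y → ℝ) → EReal := fun P Q => ∑ x, (P x : EReal) * φ x Q with hGdef
  have hφ_ne_bot : ∀ x Q, φ x Q ≠ ⊥ := fun x Q => ereal_sub_coe_ne_bot (dA_ne_bot α (W x) Q) _
  -- the uniform distribution
  set U : Y → ℝ := fun _ => (Fintype.card Y : ℝ)⁻¹ with hUdef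
  have hcard : (0:ℝ) < (Fintype.card Y : ℝ) := by
    have := Fintype.card_pos (α := Y); exact_mod_cast this
  have hUpos : ∀ y, 0 < U y := fun y => by positivity
  have hU : IsPMF U := by
    constructor
    · exact fun y => (hUpos y).le
    · rw [Finset.sum_const, Finset.card_univ, nsmul_eq_mul]
      field_simp
  have hUfin : ∀ x, φ x U ≠ ⊤ :=
    fun x => ereal_sub_coe_ne_top (dA_ne_top_of_pos hα (hW x) hUpos) _
  -- easy direction
  have easy : (⨆ P ∈ SA, ⨅ Q ∈ SB, G P Q) ≤ ⨅ Q ∈ SB, ⨆ x, φ x Q := by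
    apply iSup₂_le
    intro P hP
    apply le_iInf₂
    intro Q hQ
    refine le_trans (iInf₂_le Q hQ) ?_
    by_cases hM : (⨆ x, φ x Q) = ⊤
    · rw [hM]; exact le_top
    · have hMb : (⨆ x, φ x Q) ≠ ⊥ := by
        obtain x₀ : X := Classical.arbitrary X
        intro h
        exact hφ_ne_bot x₀ Q (eq_bot_iff.2 (h ▸ le_iSup (fun x => φ x Q) x₀))
      set m : ℝ := (⨆ x, φ x Q).toReal with hm
      have hMm : (⨆ x, φ x Q) = (m : EReal) := (EReal.coe_toReal hM hMb).symm
      have hφne : ∀ x, φ x Q ≠ ⊤ := by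
        intro x h
        exact hM (top_le_iff.1 (h ▸ le_iSup (fun x => φ x Q) x))
      have hφr : ∀ x, φ x Q = (((φ x Q).toReal : ℝ) : EReal) :=
        fun x => (EReal.coe_toReal (hφne x) (hφ_ne_bot x Q)).symm
      have hrm : ∀ x, (φ x Q).toReal ≤ m := by
        intro x
        rw [← EReal.coe_le_coe_iff, ← hφr x, ← hMm]
        exact le_iSup (fun x => φ x Q) x
      have hGQ : G P Q = ((∑ x, P x * (φ x Q).toReal : ℝ) : EReal) := by
        rw [ereal_coe_sum]
        refine Finset.sum_congr rfl fun x _ => ?_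
        rw [EReal.coe_mul]
        congr 1
        exact hφr x
      rw [hGQ, hMm, EReal.coe_le_coe_iff]
      calc ∑ x, P x * (φ x Q).toReal ≤ ∑ x, P x * m :=
            Finset.sum_le_sum fun x _ => mul_le_mul_of_nonneg_left (hrm x) (hP.1 x)
        _ = m := by rw [← Finset.sum_mul, hP.2, one_mul]
  refine le_antisymm easy ?_
  by_contra hcon
  rw [not_le] at hcon
  obtain ⟨t, hLt, htR⟩ := EReal.exists_between_coe_real hcon
  -- the upper image set
  set C : Set (X → ℝ) := {z | ∃ Q ∈ SB, ∀ x, φ x Q ≤ ((z x : ℝ) : EReal)} with hCdef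
  have hchar : ∀ z : X → ℝ, z ∈ C ↔
      ∃ Q ∈ SB, ∀ x, gz α (W x) (z x + c x) ≤ Fq α (W x) Q := by
    intro z
    constructor
    · rintro ⟨Q, hQ, h⟩
      refine ⟨Q, hQ, fun x => ?_⟩
      rw [← dA_le_iff hα (hW x).1 hQ.1]
      rw [← ereal_sub_le_iff]
      exact h x
    · rintro ⟨Q, hQ, h⟩
      refine ⟨Q, hQ, fun x => ?_⟩
      rw [hφdef]
      rw [ereal_sub_le_iff, dA_le_iff hα (hW x).1 hQ.1]
      exact h x
  have hSBc : IsCompact SB := by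
    have : SB = stdSimplex ℝ Y := rfl
    rw [this]
    exact isCompact_stdSimplex ℝ Y
  -- C is closed
  have hclosed : IsClosed C := by
    apply IsSeqClosed.isClosed
    intro zn z hmem hlim
    have hex := fun n => (hchar (zn n)).1 (hmem n)
    choose Qn hQn hQn2 using hex
    obtain ⟨Q, hQmem, ψ, hψ, hψlim⟩ := hSBc.tendsto_subseq hQn
    rw [hchar]
    refine ⟨Q, hQmem, fun x => ?_⟩
    have h1 : Filter.Tendsto (fun k => Fq α (W x) (Qn (ψ k))) atTop (𝓝 (Fq α (W x) Q)) :=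
      ((continuous_Fq hα (hW x).1).tendsto Q).comp hψlim
    have h2 : Filter.Tendsto (fun k => zn (ψ k) x + c x) atTop (𝓝 (z x + c x)) := by
      have := (((continuous_apply x).tendsto z).comp hlim).comp hψ.tendsto_atTop
      exact this.add tendsto_const_nhds
    have h3 : Filter.Tendsto (fun k => gz α (W x) (zn (ψ k) x + c x)) atTop
        (𝓝 (gz α (W x) (z x + c x))) := ((continuous_gz (W x)).tendsto _).comp h2
    exact le_of_tendsto_of_tendsto' h3 h1 fun k => hQn2 (ψ k) x
  -- C is convex
  have hconv : Convex ℝ C := by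
    intro z₁ hz₁ z₂ hz₂ a b ha hb hab
    rcases ha.eq_or_lt with ha0 | ha'
    · have hb1 : b = 1 := by linarith
      have : a • z₁ + b • z₂ = z₂ := by rw [← ha0, hb1]; simp
      rw [this]; exact hz₂
    rcases hb.eq_or_lt with hb0 | hb'
    · have ha1 : a = 1 := by linarith
      have : a • z₁ + b • z₂ = z₁ := by rw [← hb0, ha1]; simp
      rw [this]; exact hz₁
    obtain ⟨Q₁, hQ₁, h₁⟩ := hz₁
    obtain ⟨Q₂, hQ₂, h₂⟩ := hz₂
    refine ⟨fun y => a * Q₁ y + b * Q₂ y, ⟨?_, ?_⟩, ?_⟩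
    · exact fun y => add_nonneg (mul_nonneg ha (hQ₁.1 y)) (mul_nonneg hb (hQ₂.1 y))
    · rw [Finset.sum_add_distrib, ← Finset.mul_sum, ← Finset.mul_sum, hQ₁.2, hQ₂.2]
      simpa using hab
    · intro x
      have hd₁ : dA α (W x) Q₁ ≤ ((z₁ x + c x : ℝ) : EReal) :=
        ereal_sub_le_iff.1 (h₁ x)
      have hd₂ : dA α (W x) Q₂ ≤ ((z₂ x + c x : ℝ) : EReal) :=
        ereal_sub_le_iff.1 (h₂ x)
      have hmix := dA_mix_le hα (hW x) hQ₁.1 hQ₂.1 ha hb hab hd₁ hd₂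
      show φ x _ ≤ _
      rw [hφdef]
      rw [ereal_sub_le_iff]
      have harith : (a • z₁ + b • z₂) x + c x = a * (z₁ x + c x) + b * (z₂ x + c x) := by
        simp only [Pi.add_apply, Pi.smul_apply, smul_eq_mul]
        linear_combination (-(c x)) * hab
      rw [harith]
      exact hmix
  -- t·1 is not in C
  have hnotmem : (fun _ : X => t) ∉ C := by
    rintro ⟨Q, hQ, h⟩
    have hsup : (⨆ x, φ x Q) ≤ (t : EReal) := iSup_le h
    have : ((t : EReal)) < ⨆ x, φ x Q := lt_of_lt_of_le htR (iInf₂_le Q hQ)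
    exact absurd hsup (not_le.2 this)
  -- separation
  obtain ⟨f, u, hfu, hC⟩ := geometric_hahn_banach_point_closed hconv hclosed hnotmem
  set μ : X → ℝ := fun x => f (fun j => if x = j then (1:ℝ) else 0) with hμdef
  have hfz : ∀ z : X → ℝ, f z = ∑ x, z x * μ x := by
    intro z
    conv_lhs => rw [pi_eq_sum_univ z]
    rw [map_sum]
    exact Finset.sum_congr rfl fun x _ => by rw [map_smul, smul_eq_mul]
  -- C is nonempty : the uniform point
  set z₀ : X → ℝ := fun x => (φ x U).toReal with hz₀def
  have hφU : ∀ x, φ x U = ((z₀ x : ℝ) : EReal) :=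
    fun x => (EReal.coe_toReal (hUfin x) (hφ_ne_bot x U)).symm
  have hz₀ : z₀ ∈ C := ⟨U, hU, fun x => le_of_eq (hφU x)⟩
  -- upward closedness of C
  have hCup : ∀ z ∈ C, ∀ w : X → ℝ, (∀ x, z x ≤ w x) → w ∈ C := by
    rintro z ⟨Q, hQ, h⟩ w hzw
    exact ⟨Q, hQ, fun x => le_trans (h x) (EReal.coe_le_coe_iff.2 (hzw x))⟩
  -- the coefficients are nonnegative
  have hμ : ∀ x, 0 ≤ μ x := by
    intro x
    by_contra hneg
    rw [not_le] at hneg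
    set M : ℝ := (u - f z₀) / μ x with hMdef
    have hM : 0 < M := div_pos_of_neg_of_neg (by linarith [hC z₀ hz₀]) hneg
    set w : X → ℝ := z₀ + M • (fun j => if x = j then (1:ℝ) else 0) with hwdef
    have hw : w ∈ C := by
      apply hCup z₀ hz₀
      intro j
      simp only [hwdef, Pi.add_apply, Pi.smul_apply, smul_eq_mul]
      by_cases hj : x = j
      · simp only [if_pos hj]; linarith
      · simp only [if_neg hj]; simp
    have hfw : f w = u := by
      rw [hwdef, map_add, map_smul, smul_eq_mul]
      have hμx : f (fun j => if x = j then (1:ℝ) else 0) = μ x := rfl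
      rw [hμx, hMdef, div_mul_cancel₀ _ (ne_of_lt hneg)]
      ring
    have := hC w hw
    rw [hfw] at this
    exact lt_irrefl u this
  set s : ℝ := ∑ x, μ x with hsdef
  have hs0 : 0 ≤ s := Finset.sum_nonneg fun x _ => hμ x
  have hs : 0 < s := by
    rcases hs0.lt_or_eq with h | h
    · exact h
    · exfalso
      have hall : ∀ x ∈ Finset.univ, μ x = 0 :=
        (Finset.sum_eq_zero_iff_of_nonneg fun x _ => hμ x).1 h.symm
      have h1 : f z₀ = 0 := by
        rw [hfz]
        exact Finset.sum_eq_zero fun x _ => by rw [hall x (Finset.mem_univ x), mul_zero]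
      have h2 : f (fun _ : X => t) = 0 := by
        rw [hfz]
        exact Finset.sum_eq_zero fun x _ => by rw [hall x (Finset.mem_univ x), mul_zero]
      have := hC z₀ hz₀
      rw [h1] at this
      rw [h2] at hfu
      linarith
  set P : X → ℝ := fun x => μ x / s with hPdef
  have hP : IsPMF P := by
    constructor
    · exact fun x => div_nonneg (hμ x) hs0
    · rw [← Finset.sum_div, ← hsdef, div_self (ne_of_gt hs)]
  have hPz : ∀ z ∈ C, t < ∑ x, P x * z x := by
    intro z hz
    have h1 : u < f z := hC z hz
    have h2 : f (fun _ : X => t) = t * s := by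
      rw [hfz, ← Finset.mul_sum]
    have h3 : t * s < ∑ x, z x * μ x := by
      rw [← hfz]; rw [h2] at hfu; linarith
    have h4 : ∑ x, P x * z x = (∑ x, z x * μ x) / s := by
      rw [Finset.sum_div]
      exact Finset.sum_congr rfl fun x _ => by rw [hPdef]; ring
    rw [h4, lt_div_iff₀ hs]
    exact h3
  -- the key claim
  have claim : ∀ Q ∈ SB, (t : EReal) ≤ G P Q := by
    intro Q hQ
    by_cases hex : ∃ x, P x ≠ 0 ∧ φ x Q = ⊤
    · obtain ⟨x₁, hx₁, htop⟩ := hex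
      have hGtop : G P Q = ⊤ := by
        apply ereal_sum_eq_top Finset.univ _
          (fun x _ => coe_mul_ne_bot (hP.1 x) (hφ_ne_bot x Q)) (Finset.mem_univ x₁)
        rw [htop]
        exact EReal.coe_mul_top_of_pos (lt_of_le_of_ne (hP.1 x₁) (Ne.symm hx₁))
      rw [hGtop]
      exact le_top
    · push_neg at hex
      set r : X → ℝ := fun x => (φ x Q).toReal with hrdef
      have hφr : ∀ x, P x ≠ 0 → φ x Q = ((r x : ℝ) : EReal) :=
        fun x hx => (EReal.coe_toReal (hex x hx) (hφ_ne_bot x Q)).symm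
      have hGQ : G P Q = ((∑ x, P x * r x : ℝ) : EReal) := by
        rw [ereal_coe_sum]
        refine Finset.sum_congr rfl fun x _ => ?_
        by_cases hx : P x = 0
        · rw [hx]; simp
        · rw [hφr x hx, ← EReal.coe_mul]
      rw [hGQ, EReal.coe_le_coe_iff]
      set D : ℝ := ∑ x, P x * r x with hDdef
      set A : ℝ := ∑ x, P x * z₀ x with hAdef
      have hstep : ∀ ε ∈ Set.Ioo (0:ℝ) 1, t ≤ (1 - ε) * D + ε * A := by
        intro ε hε
        set Qε : Y → ℝ := fun y => (1 - ε) * Q y + ε * U y with hQεdef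
        have hQε : IsPMF Qε := by
          constructor
          · exact fun y => add_nonneg (mul_nonneg (by linarith [hε.2]) (hQ.1 y))
              (mul_nonneg hε.1.le (hU.1 y))
          · rw [Finset.sum_add_distrib, ← Finset.mul_sum, ← Finset.mul_sum, hQ.2, hU.2]
            ring
        have hQεpos : ∀ y, 0 < Qε y := fun y =>
          add_pos_of_nonneg_of_pos (mul_nonneg (by linarith [hε.2]) (hQ.1 y))
            (mul_pos hε.1 (hUpos y))
        have hεfin : ∀ x, φ x Qε ≠ ⊤ :=
          fun x => ereal_sub_coe_ne_top (dA_ne_top_of_pos hα (hW x) hQεpos) _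
        set zε : X → ℝ := fun x => (φ x Qε).toReal with hzεdef
        have hφε : ∀ x, φ x Qε = ((zε x : ℝ) : EReal) :=
          fun x => (EReal.coe_toReal (hεfin x) (hφ_ne_bot x Qε)).symm
        have hzεC : zε ∈ C := ⟨Qε, hQε, fun x => le_of_eq (hφε x)⟩
        have h1 : t < ∑ x, P x * zε x := hPz zε hzεC
        have h2 : ∀ x, P x ≠ 0 → zε x ≤ (1 - ε) * r x + ε * z₀ x := by
          intro x hx
          have hdQ : dA α (W x) Q ≤ ((r x + c x : ℝ) : EReal) :=
            ereal_sub_le_iff.1 (le_of_eq (hφr x hx))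
          have hdU : dA α (W x) U ≤ ((z₀ x + c x : ℝ) : EReal) :=
            ereal_sub_le_iff.1 (le_of_eq (hφU x))
          have hmix := dA_mix_le hα (hW x) hQ.1 hU.1 (by linarith [hε.2] : (0:ℝ) ≤ 1 - ε)
            hε.1.le (by ring) hdQ hdU
          have h' : φ x Qε ≤ (((1 - ε) * r x + ε * z₀ x : ℝ) : EReal) := by
            rw [hφdef]
            rw [ereal_sub_le_iff]
            have : ((1 - ε) * r x + ε * z₀ x) + c x
                = (1 - ε) * (r x + c x) + ε * (z₀ x + c x) := by ring
            rw [this]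
            exact hmix
          rw [hφε x] at h'
          exact EReal.coe_le_coe_iff.1 h'
        have h3 : ∑ x, P x * zε x ≤ ∑ x, P x * ((1 - ε) * r x + ε * z₀ x) := by
          apply Finset.sum_le_sum
          intro x _
          by_cases hx : P x = 0
          · rw [hx]; simp
          · exact mul_le_mul_of_nonneg_left (h2 x hx) (hP.1 x)
        have h4 : ∑ x, P x * ((1 - ε) * r x + ε * z₀ x) = (1 - ε) * D + ε * A := by
          rw [hDdef, hAdef, Finset.mul_sum, Finset.mul_sum, ← Finset.sum_add_distrib]
          exact Finset.sum_congr rfl fun x _ => by ring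
        linarith [h1, h3, h4.le, h4.ge]
      have hlimit : Filter.Tendsto (fun ε : ℝ => (1 - ε) * D + ε * A)
          (𝓝[>] (0:ℝ)) (𝓝 D) := by
        have hcont : Continuous fun ε : ℝ => (1 - ε) * D + ε * A :=
          ((continuous_const.sub continuous_id).mul continuous_const).add
            (continuous_id.mul continuous_const)
        have h0 : Filter.Tendsto (fun ε : ℝ => (1 - ε) * D + ε * A) (𝓝 0) (𝓝 D) := by
          have := hcont.tendsto 0
          simpa using this
        exact h0.mono_left nhdsWithin_le_nhds
      have hev : ∀ᶠ ε in 𝓝[>] (0:ℝ), t ≤ (1 - ε) * D + ε * A := by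
        have h01 : ∀ᶠ ε in 𝓝[>] (0:ℝ), ε < 1 :=
          eventually_nhdsWithin_of_eventually_nhds
            (eventually_of_mem (Iio_mem_nhds (by norm_num)) fun x hx => hx)
        have h0 : ∀ᶠ ε in 𝓝[>] (0:ℝ), 0 < ε :=
          eventually_of_mem self_mem_nhdsWithin fun x hx => hx
        filter_upwards [h01, h0] with ε hε1 hε0 using hstep ε ⟨hε0, hε1⟩
      exact ge_of_tendsto hlimit hev
  have hfinal : (t : EReal) ≤ ⨆ P ∈ SA, ⨅ Q ∈ SB, G P Q :=
    le_trans (le_iInf₂ claim) (le_iSup₂ (f := fun P (_ : P ∈ SA) => ⨅ Q ∈ SB, G P Q) P hP)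
  exact absurd hLt (not_lt.2 hfinal)



lemma ereal_sum_sub_coe {ι : Type*} [Fintype ι] (f : ι → EReal) (hf : ∀ i, f i ≠ ⊥)
    (p g : ι → ℝ) (hp : ∀ i, 0 ≤ p i) :
    ∑ i, (p i : EReal) * (f i - (g i : EReal))
      = (∑ i, (p i : EReal) * f i) - ((∑ i, p i * g i : ℝ) : EReal) := by
  have h1 : ∀ i : ι, (p i : EReal) * (f i - (g i : EReal))
      = (p i : EReal) * f i + ((-(p i * g i) : ℝ) : EReal) := by
    intro i
    rw [ereal_mul_sub (p i) (g i) (hp i) (f i) (hf i), EReal.coe_neg]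
    exact sub_eq_add_neg _ _
  calc ∑ i, (p i : EReal) * (f i - (g i : EReal))
      = ∑ i, ((p i : EReal) * f i + ((-(p i * g i) : ℝ) : EReal)) :=
        Finset.sum_congr rfl fun i _ => h1 i
    _ = (∑ i, (p i : EReal) * f i) + ∑ i, ((-(p i * g i) : ℝ) : EReal) :=
        Finset.sum_add_distrib
    _ = (∑ i, (p i : EReal) * f i) + ((∑ i, -(p i * g i) : ℝ) : EReal) := by
        rw [ereal_coe_sum]
    _ = _ := by
        rw [Finset.sum_neg_distrib, EReal.coe_neg]
        exact (sub_eq_add_neg _ _).symm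

end ALAux

/-- the A-L capacity equals the A-L radius. -/
theorem alCap_eq_alRad {X Y : Type*} [Fintype X] [Fintype Y]
    [Nonempty X] [Nonempty Y] {l : ℕ} (hl : 0 < l)
    (α : ℝ) (hα : α ∈ Set.Ioc (0 : ℝ) 1)
    (W : X → Y → ℝ) (hW : ∀ x, IsPMF (W x))
    (ρ : X → Fin l → ℝ) (hρ : ∀ x i, 0 ≤ ρ x i)
    (lam : Fin l → ℝ) (hlam : ∀ i, 0 ≤ lam i) :
    alCap α W ρ lam =
      ⨅ Q ∈ {Q : Y → ℝ | IsPMF Q},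
        ⨆ x : X, (dA α (W x) Q - (((∑ i, lam i * ρ x i) : ℝ) : EReal)) := by
  classical
  have hstep : alCap α W ρ lam
      = ⨆ P ∈ {P : X → ℝ | IsPMF P}, ⨅ Q ∈ {Q : Y → ℝ | IsPMF Q},
          ∑ x, (P x : EReal) * (dA α (W x) Q - ((∑ i, lam i * ρ x i : ℝ) : EReal)) := by
    unfold alCap aInfo
    refine iSup_congr fun P => iSup_congr fun hP => ?_
    have hL : (∑ i, lam i * ∑ x, P x * ρ x i) = ∑ x, P x * ∑ i, lam i * ρ x i := by
      calc ∑ i, lam i * ∑ x, P x * ρ x i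
          = ∑ i, ∑ x, lam i * (P x * ρ x i) := by
            refine Finset.sum_congr rfl fun i _ => ?_
            rw [Finset.mul_sum]
        _ = ∑ x, ∑ i, lam i * (P x * ρ x i) := Finset.sum_comm
        _ = ∑ x, P x * ∑ i, lam i * ρ x i := by
            refine Finset.sum_congr rfl fun x _ => ?_
            rw [Finset.mul_sum]
            exact Finset.sum_congr rfl fun i _ => by ring
    rw [hL, ALAux.iInf2_sub_const]
    refine iInf_congr fun Q => iInf_congr fun hQ => ?_
    unfold cDiv
    exact (ALAux.ereal_sum_sub_coe _ (fun x => ALAux.dA_ne_bot α (W x) Q) _ _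
      (fun x => hP.1 x)).symm
  rw [hstep]
  exact ALAux.minimax hα W hW _
end

section
/- Let W : X → P(Y) with X, Y finite, ρ : X → ℝ≥0^ℓ, λ ∈ ℝ≥0^ℓ, α ∈ (0,1), and P a probability mass function on X. Define m(y) := [ Σ_x P(x) e^{(1−α)λ·ρ(x)} W(x)(y)^α ]^{1/α} and the R-G mean Q^{G}_{α,P}(y) := m(y)/Σ_{y'} m(y'). Then for every probability mass function Q on Y: D_α( P∘(W e^{((1−α)/α)λ·ρ}) ‖ P⊗Q ) = D_α( P∘(W e^{((1−α)/α)λ·ρ}) ‖ P⊗Q^{G}_{α,P} ) + D_α( Q^{G}_{α,P} ‖ Q ). In particular Q^{G}_{α,P} is the unique minimizer defining the R-G information. -/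
open scoped BigOperators

lemma geom_eq_case {α a b : ℝ} (hα0 : 0 < α) (hα1 : α < 1) (ha : 0 ≤ a) (hb : 0 ≤ b)
    (h : a ^ α * b ^ (1 - α) = α * a + (1 - α) * b) : a = b := by
  have h1α : (0:ℝ) < 1 - α := by linarith
  rcases hb.eq_or_lt with hb0 | hb0
  · rw [← hb0] at h ⊢
    rw [Real.zero_rpow (ne_of_gt h1α)] at h
    have : α * a = 0 := by linarith
    have := (mul_eq_zero.1 this).resolve_left (ne_of_gt hα0)
    linarith
  rcases ha.eq_or_lt with ha0 | ha0
  · rw [← ha0] at h ⊢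
    rw [Real.zero_rpow (ne_of_gt hα0)] at h
    nlinarith
  by_contra hne
  have hlog : α * Real.log a + (1 - α) * Real.log b < Real.log (α * a + (1 - α) * b) := by
    have := strictConcaveOn_log_Ioi.2 (Set.mem_Ioi.2 ha0) (Set.mem_Ioi.2 hb0) hne hα0 h1α
      (by ring)
    simpa [smul_eq_mul] using this
  have hab : a ^ α * b ^ (1 - α) = Real.exp (α * Real.log a + (1 - α) * Real.log b) := by
    rw [Real.exp_add, Real.rpow_def_of_pos ha0, Real.rpow_def_of_pos hb0,
      mul_comm (Real.log a) α, mul_comm (Real.log b) (1 - α)]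
  have hpos : 0 < α * a + (1 - α) * b := by positivity
  have := Real.exp_lt_exp.2 hlog
  rw [Real.exp_log hpos] at this
  rw [hab] at h
  linarith

/-- the Rényi–Gallager mean satisfies the Pythagorean identity and is the
unique minimizer defining the Rényi–Gallager information. -/
theorem rg_mean_identity {X Y : Type*} [Fintype X] [Fintype Y]
    [Nonempty X] [Nonempty Y] {l : ℕ} (hl : 0 < l)
    (α : ℝ) (hα : α ∈ Set.Ioo (0 : ℝ) 1)
    (W : X → Y → ℝ) (hW : ∀ x, IsPMF (W x))
    (ρ : X → Fin l → ℝ) (hρ : ∀ x i, 0 ≤ ρ x i)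
    (lam : Fin l → ℝ) (hlam : ∀ i, 0 ≤ lam i)
    (P : X → ℝ) (hP : IsPMF P)
    (m : Y → ℝ)
    (hm : m = fun y =>
      (∑ x, P x * Real.exp ((1 - α) * ∑ i, lam i * ρ x i) * W x y ^ α) ^ (1 / α))
    (hmpos : 0 < ∑ y, m y)
    (QG : Y → ℝ) (hQG : QG = fun y => m y / ∑ y', m y')
    (μ : X × Y → ℝ)
    (hμ : μ = fun p =>
      P p.1 * W p.1 p.2 * Real.exp ((1 - α) / α * ∑ i, lam i * ρ p.1 i)) :
    (∀ Q : Y → ℝ, IsPMF Q →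
        rDiv α μ (fun p : X × Y => P p.1 * Q p.2) =
          rDiv α μ (fun p : X × Y => P p.1 * QG p.2) + rDiv α QG Q) ∧
      (∀ Q : Y → ℝ, IsPMF Q →
        rDiv α μ (fun p : X × Y => P p.1 * QG p.2) ≤
          rDiv α μ (fun p : X × Y => P p.1 * Q p.2)) ∧
      (∀ Q : Y → ℝ, IsPMF Q →
        rDiv α μ (fun p : X × Y => P p.1 * Q p.2) =
          rDiv α μ (fun p : X × Y => P p.1 * QG p.2) → Q = QG) := by
  obtain ⟨hα0, hα1⟩ := hα
  have hα0' : α ≠ 0 := ne_of_gt hα0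
  have h1α : (0:ℝ) < 1 - α := by linarith
  have hSpos : 0 < ∑ y, m y := hmpos
  have hSapos : 0 < (∑ y, m y) ^ α := Real.rpow_pos_of_pos hSpos α
  have hm0 : ∀ y, 0 ≤ m y := by
    intro y; rw [hm]
    apply Real.rpow_nonneg
    apply Finset.sum_nonneg
    intro x _
    have h1 := (hW x).1 y
    have h2 := hP.1 x
    positivity
  have hQG0 : ∀ y, 0 ≤ QG y := by
    intro y; rw [hQG]; exact div_nonneg (hm0 y) hSpos.le
  have hQGsum : ∑ y, QG y = 1 := by
    rw [hQG]
    simp only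
    rw [← Finset.sum_div]
    exact div_self (ne_of_gt hSpos)
  have hma : ∀ y, m y ^ α = ∑ x, P x * Real.exp ((1 - α) * ∑ i, lam i * ρ x i) * W x y ^ α := by
    intro y
    have hs : 0 ≤ ∑ x, P x * Real.exp ((1 - α) * ∑ i, lam i * ρ x i) * W x y ^ α := by
      apply Finset.sum_nonneg; intro x _
      have h1 := (hW x).1 y; have h2 := hP.1 x; positivity
    rw [hm]
    simp only
    rw [← Real.rpow_mul hs, one_div_mul_cancel hα0', Real.rpow_one]
  -- Lemma A
  have hA : ∀ Q : Y → ℝ, (∀ y, 0 ≤ Q y) →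
      rSum α μ (fun p : X × Y => P p.1 * Q p.2) = ∑ y, m y ^ α * Q y ^ (1 - α) := by
    intro Q hQ0
    have key : ∀ x y, μ (x, y) ^ α * (P x * Q y) ^ (1 - α)
        = (P x * Real.exp ((1 - α) * ∑ i, lam i * ρ x i) * W x y ^ α) * Q y ^ (1 - α) := by
      intro x y
      have hPx := hP.1 x
      have hWxy := (hW x).1 y
      rw [hμ]
      simp only
      rw [Real.mul_rpow (by positivity) (Real.exp_pos _).le, Real.mul_rpow hPx hWxy,
        Real.mul_rpow hPx (hQ0 y), ← Real.exp_mul]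
      have harg : (1 - α) / α * (∑ i, lam i * ρ x i) * α = (1 - α) * ∑ i, lam i * ρ x i := by
        field_simp
      rw [harg]
      have hP1 : P x ^ α * P x ^ (1 - α) = P x := by
        rw [← Real.rpow_add' hPx (by intro h; linarith)]
        have h1 : α + (1 - α) = 1 := by ring
        rw [h1, Real.rpow_one]
      linear_combination (W x y ^ α * Real.exp ((1 - α) * ∑ i, lam i * ρ x i) * Q y ^ (1 - α)) * hP1
    simp only [rSum]
    rw [Fintype.sum_prod_type, Finset.sum_comm]
    refine Finset.sum_congr rfl fun y _ => ?_
    rw [hma y, Finset.sum_mul]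
    refine Finset.sum_congr rfl fun x _ => ?_
    exact key x y
  -- rSum against QG factorizes
  have hB : ∀ Q : Y → ℝ,
      rSum α QG Q = (∑ y, m y ^ α * Q y ^ (1 - α)) / (∑ y, m y) ^ α := by
    intro Q
    simp only [rSum, hQG]
    rw [Finset.sum_div]
    refine Finset.sum_congr rfl fun y _ => ?_
    rw [Real.div_rpow (hm0 y) hSpos.le]
    ring
  -- rSum μ against QG
  have hC : rSum α μ (fun p : X × Y => P p.1 * QG p.2) = (∑ y, m y) ^ α := by
    rw [hA QG hQG0]
    have hpt : ∀ y, m y ^ α * QG y ^ (1 - α) = m y / (∑ y', m y') ^ (1 - α) := by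
      intro y
      rw [hQG]
      simp only
      have h1 : m y ^ α * m y ^ (1 - α) = m y := by
        rw [← Real.rpow_add' (hm0 y) (by intro h; linarith)]
        have h2 : α + (1 - α) = 1 := by ring
        rw [h2, Real.rpow_one]
      rw [Real.div_rpow (hm0 y) hSpos.le, ← mul_div_assoc, h1]
    rw [Finset.sum_congr rfl fun y _ => hpt y, ← Finset.sum_div,
      div_eq_iff (ne_of_gt (Real.rpow_pos_of_pos hSpos _)), ← Real.rpow_add hSpos]
    have h2 : α + (1 - α) = 1 := by ring
    rw [h2, Real.rpow_one]
  -- AM-GM facts for a PMF Q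
  have hle : ∀ Q : Y → ℝ, IsPMF Q → ∀ y,
      QG y ^ α * Q y ^ (1 - α) ≤ α * QG y + (1 - α) * Q y := by
    intro Q hQpmf y
    exact Real.geom_mean_le_arith_mean2_weighted hα0.le h1α.le (hQG0 y) (hQpmf.1 y) (by ring)
  have hone : ∀ Q : Y → ℝ, IsPMF Q → ∑ y, (α * QG y + (1 - α) * Q y) = 1 := by
    intro Q hQpmf
    rw [Finset.sum_add_distrib, ← Finset.mul_sum, ← Finset.mul_sum, hQGsum, hQpmf.2]
    ring
  have hT1 : ∀ Q : Y → ℝ, IsPMF Q → rSum α QG Q ≤ 1 := by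
    intro Q hQpmf
    calc rSum α QG Q ≤ ∑ y, (α * QG y + (1 - α) * Q y) :=
          Finset.sum_le_sum fun y _ => hle Q hQpmf y
      _ = 1 := hone Q hQpmf
  have hT0 : ∀ Q : Y → ℝ, IsPMF Q → 0 ≤ rSum α QG Q := by
    intro Q hQpmf
    apply Finset.sum_nonneg
    intro y _
    have h1 := hQG0 y; have h2 := hQpmf.1 y
    positivity
  -- nonnegativity of rDiv α QG Q
  have hDnn : ∀ Q : Y → ℝ, IsPMF Q → (0 : EReal) ≤ rDiv α QG Q := by
    intro Q hQpmf
    simp only [rDiv]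
    split_ifs with h
    · exact le_top
    · have hpos : 0 < rSum α QG Q := lt_of_le_of_ne (hT0 Q hQpmf) (Ne.symm h)
      have hlog : Real.log (rSum α QG Q) ≤ 0 := Real.log_nonpos hpos.le (hT1 Q hQpmf)
      have hc : 1 / (α - 1) ≤ 0 := le_of_lt (by apply one_div_neg.2; linarith)
      exact EReal.coe_nonneg.2 (by nlinarith)
  -- Part 1: Pythagorean identity
  have part1 : ∀ Q : Y → ℝ, IsPMF Q →
      rDiv α μ (fun p : X × Y => P p.1 * Q p.2) =
        rDiv α μ (fun p : X × Y => P p.1 * QG p.2) + rDiv α QG Q := by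
    intro Q hQpmf
    have hM0 : 0 ≤ ∑ y, m y ^ α * Q y ^ (1 - α) := by
      apply Finset.sum_nonneg
      intro y _
      have h1 := hm0 y; have h2 := hQpmf.1 y
      positivity
    have e1 := hA Q hQpmf.1
    have e2 := hC
    have e3 := hB Q
    simp only [rDiv]
    rw [e1, e2, e3]
    rcases hM0.eq_or_lt with hM | hM
    · rw [if_pos hM.symm, if_neg (ne_of_gt hSapos), if_pos (by rw [← hM]; simp)]
      exact (EReal.coe_add_top _).symm
    · rw [if_neg (ne_of_gt hM), if_neg (ne_of_gt hSapos),
        if_neg (ne_of_gt (div_pos hM hSapos)), ← EReal.coe_add, EReal.coe_eq_coe_iff,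
        Real.log_div (ne_of_gt hM) (ne_of_gt hSapos)]
      ring
  refine ⟨part1, fun Q hQpmf => ?_, fun Q hQpmf h => ?_⟩
  · rw [part1 Q hQpmf]
    exact le_add_of_nonneg_right (hDnn Q hQpmf)
  · -- uniqueness
    have hid := part1 Q hQpmf
    rw [h] at hid
    have hfin : rDiv α μ (fun p : X × Y => P p.1 * QG p.2) =
        (((1 / (α - 1)) * Real.log ((∑ y, m y) ^ α) : ℝ) : EReal) := by
      simp only [rDiv]
      rw [hC, if_neg (ne_of_gt hSapos)]
    rw [hfin] at hid
    rcases eq_or_ne (rSum α QG Q) 0 with hz | hz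
    · exfalso
      have : rDiv α QG Q = ⊤ := by simp only [rDiv]; rw [if_pos hz]
      rw [this, EReal.coe_add_top] at hid
      exact EReal.coe_ne_top _ hid
    · have hpos : 0 < rSum α QG Q := lt_of_le_of_ne (hT0 Q hQpmf) (Ne.symm hz)
      have hq : rDiv α QG Q = (((1 / (α - 1)) * Real.log (rSum α QG Q) : ℝ) : EReal) := by
        simp only [rDiv]; rw [if_neg hz]
      rw [hq, ← EReal.coe_add, EReal.coe_eq_coe_iff] at hid
      have hc : 1 / (α - 1) ≠ 0 := by
        apply ne_of_lt; apply one_div_neg.2; linarith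
      have hlz : Real.log (rSum α QG Q) = 0 := by
        have : 1 / (α - 1) * Real.log (rSum α QG Q) = 0 := by linarith
        exact (mul_eq_zero.1 this).resolve_left hc
      have hT : rSum α QG Q = 1 := by
        rcases Real.log_eq_zero.1 hlz with h' | h' | h'
        · exact absurd h' (ne_of_gt hpos)
        · exact h'
        · exfalso; linarith
      have hsum : ∑ y, QG y ^ α * Q y ^ (1 - α) = ∑ y, (α * QG y + (1 - α) * Q y) := by
        have : rSum α QG Q = ∑ y, QG y ^ α * Q y ^ (1 - α) := rfl
        rw [← this, hT, hone Q hQpmf]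
      have hptwise := (Finset.sum_eq_sum_iff_of_le fun y _ => hle Q hQpmf y).1 hsum
      funext y
      exact (geom_eq_case hα0 hα1 (hQG0 y) (hQpmf.1 y)
        (hptwise y (Finset.mem_univ y))).symm
end
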